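/- arXiv:1105.4036 — 4 statements merged into one kernel-verified Lean document; each statement's English description precedes it below -/
import Mathlib

section
/- Let C be a cycle of length n with dissipative vertex p and other vertices v_1,...,v_{n-1} numbered counterclockwise. Label the recurrent configurations c_0, c_1, ..., c_{n-1}, where c_j(v_i) = 0 if i = j and 1 otherwise, and c_0 ≡ 1. Then for any configuration η on the non-dissipative vertices, the stabilization of c_j + η equals c_m where m ≡ j − Σ_{k=1}^{n-1} η(v_k)·k (mod n). -/
/-- The `n` recurrent configurations on the cycle of length `n` with
dissipative vertex `0`: `CycleCfg n j` has `0` chips at `v_j = j` and `1` chip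
at every other non-dissipative vertex; for `j = 0` it is constantly `1` on the
non-dissipative vertices. -/
def CycleCfg (n : ℕ) (j : ZMod n) : ZMod n → ℕ :=
  fun i => if i = 0 then 0 else if i = j then 0 else 1

/-- The number of chips at vertex `i` after firing each vertex `w` of the cycle
`u w` times, starting from the configuration `c` (vertex `i` has neighbours
`i + 1` and `i - 1`, and degree `2`). -/
def CycleToppleVal (n : ℕ) (c u : ZMod n → ℕ) (i : ZMod n) : ℤ :=
  (c i : ℤ) + u (i + 1) + u (i - 1) - 2 * u i

/-- `σ` is the stabilization of the configuration `c` on the cycle of length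
`n` with dissipative vertex `0`: there is a firing vector `u` (the odometer,
not firing the dissipative vertex) producing `σ` from `c`, with `σ` stable, and
`u` is minimal among all firing vectors yielding a stable nonnegative result
(least action principle). -/
def CycleIsStabilization (n : ℕ) (c σ : ZMod n → ℕ) : Prop :=
  ∃ u : ZMod n → ℕ, u 0 = 0 ∧ σ 0 = 0 ∧
    (∀ i : ZMod n, i ≠ 0 → (σ i : ℤ) = CycleToppleVal n c u i) ∧
    (∀ i : ZMod n, i ≠ 0 → σ i ≤ 1) ∧
    (∀ u' : ZMod n → ℕ, u' 0 = 0 →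
      (∀ i : ZMod n, i ≠ 0 →
        0 ≤ CycleToppleVal n c u' i ∧ CycleToppleVal n c u' i ≤ 1) →
      ∀ i, u i ≤ u' i)

section Aux

private lemma val_inj' {n : ℕ} [NeZero n] (a b : ZMod n) (h : a.val = b.val) : a = b := by
  have ha : ((a.val : ℕ) : ZMod n) = a := ZMod.natCast_rightInverse a
  have hb : ((b.val : ℕ) : ZMod n) = b := ZMod.natCast_rightInverse b
  rw [← ha, ← hb, h]

/-- Core path computation: explicit odometer for adding a single chip at `kv`
to the recurrent configuration with hole at `jv`. -/
private lemma path_core (n jv kv : ℕ) (hj : jv < n) (hk1 : 1 ≤ kv) (hk2 : kv < n) :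
    ∃ (mv : ℕ) (U : ℕ → ℤ), mv < n ∧ ((mv + kv) % n = jv) ∧
      U 0 = 0 ∧ U n = 0 ∧ (∀ i, i ≤ n → 0 ≤ U i) ∧
      ∀ i, 1 ≤ i → i < n →
        (if i = mv then (0:ℤ) else 1) =
          ((if i = jv then (0:ℤ) else 1) + (if i = kv then 1 else 0)) +
            U (i+1) + U (i-1) - 2 * U i := by
  obtain ⟨mv, hmn, hmod, hcase⟩ :
      ∃ mv : ℕ, mv < n ∧ (mv + kv) % n = jv ∧
        ((kv ≤ jv ∧ mv + kv = jv) ∨ (jv < kv ∧ mv + kv = n + jv)) := by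
    rcases le_or_gt kv jv with h | h
    · refine ⟨jv - kv, by omega, ?_, Or.inl ⟨h, by omega⟩⟩
      have he : jv - kv + kv = jv := by omega
      rw [he, Nat.mod_eq_of_lt hj]
    · refine ⟨n + jv - kv, by omega, ?_, Or.inr ⟨h, by omega⟩⟩
      have he : n + jv - kv + kv = n + jv := by omega
      rw [he, Nat.add_mod_left, Nat.mod_eq_of_lt hj]
  refine ⟨mv, fun i => min (i:ℤ) mv + min (i:ℤ) kv - min (i:ℤ) jv -
      (if kv ≤ jv then 0 else (i:ℤ)), hmn, hmod, ?_, ?_, ?_, ?_⟩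
  · beta_reduce
    split_ifs <;> simp
  · beta_reduce
    rcases hcase with ⟨h, he⟩ | ⟨h, he⟩ <;> split_ifs <;> omega
  · intro i hi
    beta_reduce
    rcases hcase with ⟨h, he⟩ | ⟨h, he⟩ <;> split_ifs <;> omega
  · intro i h1 h2
    beta_reduce
    rcases hcase with ⟨h, he⟩ | ⟨h, he⟩ <;> split_ifs <;> omega

/-- Adding a single chip at `k ≠ 0` to the recurrent configuration `c_j` can be
toppled to `c_{j-k}`. -/
private lemma reach_single (n : ℕ) [NeZero n] (j k : ZMod n) (hk : k ≠ 0) :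
    ∃ u : ZMod n → ℕ, u 0 = 0 ∧ ∀ i, i ≠ 0 →
      (CycleCfg n (j - k) i : ℤ) =
        CycleToppleVal n (fun i => CycleCfg n j i + if i = k then 1 else 0) u i := by
  have hn : 1 < n := by
    by_contra h
    have h0 : n ≠ 0 := NeZero.ne n
    have h1 : n = 1 := by omega
    subst h1
    have h2 := ZMod.val_lt k
    have h3 : k.val = 0 := by omega
    exact hk ((ZMod.val_eq_zero k).1 h3)
  have hj : j.val < n := ZMod.val_lt j
  have hk2 : k.val < n := ZMod.val_lt k
  have hk1 : 1 ≤ k.val := by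
    rcases Nat.eq_zero_or_pos k.val with h | h
    · exact absurd ((ZMod.val_eq_zero k).1 h) hk
    · exact h
  obtain ⟨mv, U, hmn, hmod, hU0, hUn, hUpos, heq⟩ := path_core n j.val k.val hj hk1 hk2
  have hmcast : j - k = (mv : ZMod n) := by
    have h1 : (mv : ZMod n) + (k.val : ZMod n) = (j.val : ZMod n) := by
      have h2 := ZMod.natCast_mod (mv + k.val) n
      rw [hmod] at h2
      push_cast at h2
      exact h2.symm
    have h2 : ((j.val : ℕ) : ZMod n) = j := ZMod.natCast_rightInverse j
    have h3 : ((k.val : ℕ) : ZMod n) = k := ZMod.natCast_rightInverse k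
    symm
    rw [eq_sub_iff_add_eq, ← h3, ← h2]
    exact h1
  refine ⟨fun i => (U i.val).toNat, by simp [ZMod.val_zero, hU0], ?_⟩
  intro i hi
  have hi1 : 1 ≤ i.val := by
    rcases Nat.eq_zero_or_pos i.val with h | h
    · exact absurd ((ZMod.val_eq_zero i).1 h) hi
    · exact h
  have hi2 : i.val < n := ZMod.val_lt i
  have hadd : U ((i + 1 : ZMod n)).val = U (i.val + 1) := by
    have h1 : (i + 1).val = (i.val + 1) % n := by
      rw [ZMod.val_add, ZMod.val_one'' (by omega)]
    rcases Nat.lt_or_ge (i.val + 1) n with h | h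
    · rw [h1, Nat.mod_eq_of_lt h]
    · have he : i.val + 1 = n := by omega
      rw [h1, he, Nat.mod_self, hU0, hUn]
  have hsub : U ((i - 1 : ZMod n)).val = U (i.val - 1) := by
    have h2 : ((i.val : ℕ) : ZMod n) = i := ZMod.natCast_rightInverse i
    have h1 : ((i.val - 1 : ℕ) : ZMod n) = i - 1 := by
      rw [Nat.cast_sub hi1, Nat.cast_one, h2]
    rw [← h1, ZMod.val_cast_of_lt (show i.val - 1 < n by omega)]
  have htn : ∀ x, x ≤ n → (((U x).toNat : ℤ)) = U x :=
    fun x hx => Int.toNat_of_nonneg (hUpos x hx)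
  have e1 : (i = j - k) = (i.val = mv) := by
    apply propext; constructor
    · intro h; rw [h, hmcast, ZMod.val_cast_of_lt hmn]
    · intro h
      rw [hmcast]
      exact val_inj' _ _ (by rw [ZMod.val_cast_of_lt hmn]; exact h)
  have e2 : (i = j) = (i.val = j.val) := by
    apply propext; exact ⟨fun h => by rw [h], fun h => val_inj' _ _ h⟩
  have e3 : (i = k) = (i.val = k.val) := by
    apply propext; exact ⟨fun h => by rw [h], fun h => val_inj' _ _ h⟩
  have hmain := heq i.val hi1 hi2
  simp only [CycleToppleVal, CycleCfg, e1, e2, e3, if_neg hi, hadd, hsub,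
    htn _ (show i.val + 1 ≤ n by omega), htn _ (show i.val - 1 ≤ n by omega),
    htn _ (show i.val ≤ n by omega)]
  push_cast
  split_ifs at hmain ⊢ <;> omega

/-- Composition of topplings. -/
private lemma reach_trans {n : ℕ} (c e σ τ : ZMod n → ℕ)
    (h1 : ∃ u : ZMod n → ℕ, u 0 = 0 ∧
      ∀ i, i ≠ 0 → (σ i : ℤ) = CycleToppleVal n c u i)
    (h2 : ∃ v : ZMod n → ℕ, v 0 = 0 ∧
      ∀ i, i ≠ 0 → (τ i : ℤ) = CycleToppleVal n (fun x => σ x + e x) v i) :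
    ∃ w : ZMod n → ℕ, w 0 = 0 ∧
      ∀ i, i ≠ 0 → (τ i : ℤ) = CycleToppleVal n (fun x => c x + e x) w i := by
  obtain ⟨u, hu0, hu⟩ := h1
  obtain ⟨v, hv0, hv⟩ := h2
  refine ⟨fun i => u i + v i, by simp [hu0, hv0], ?_⟩
  intro i hi
  have ha := hu i hi
  have hb := hv i hi
  simp only [CycleToppleVal] at ha hb ⊢
  push_cast at ha hb ⊢
  omega

/-- Main reachability statement, by induction on the number of added chips. -/
private lemma reach_main (n : ℕ) [NeZero n] (N : ℕ) :
    ∀ (η : ZMod n → ℕ), (∑ i : ZMod n, η i) = N → η 0 = 0 → ∀ j : ZMod n,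
      ∃ u : ZMod n → ℕ, u 0 = 0 ∧ ∀ i, i ≠ 0 →
        ((CycleCfg n (j - ∑ k : ZMod n, (η k : ZMod n) * k) i : ℤ) =
          CycleToppleVal n (fun i => CycleCfg n j i + η i) u i) := by
  induction N with
  | zero =>
    intro η hsum hη0 j
    have hz : ∀ i, η i = 0 := by
      intro i
      exact (Finset.sum_eq_zero_iff.1 hsum) i (Finset.mem_univ i)
    have hS : (∑ k : ZMod n, (η k : ZMod n) * k) = 0 := by
      apply Finset.sum_eq_zero
      intro i _
      rw [hz i]
      simp
    refine ⟨fun _ => 0, rfl, ?_⟩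
    intro i hi
    simp only [CycleToppleVal, hS, sub_zero, hz i, Nat.cast_zero, add_zero]
    push_cast
    ring
  | succ N ih =>
    intro η hsum hη0 j
    have hex : ∃ k : ZMod n, η k ≠ 0 := by
      by_contra h
      push_neg at h
      have : (∑ i : ZMod n, η i) = 0 := Finset.sum_eq_zero fun i _ => h i
      omega
    obtain ⟨k, hkne⟩ := hex
    have hk0 : k ≠ 0 := fun h => hkne (h ▸ hη0)
    set η' : ZMod n → ℕ := Function.update η k (η k - 1) with hη'
    have hη'k : η' k = η k - 1 := Function.update_self k _ η
    have hη'ne : ∀ i, i ≠ k → η' i = η i := fun i h => Function.update_of_ne h _ η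
    have hη'0 : η' 0 = 0 := by rw [hη'ne 0 (Ne.symm hk0), hη0]
    have hsum' : (∑ i : ZMod n, η' i) = N := by
      have ha := Finset.add_sum_erase Finset.univ η (Finset.mem_univ k)
      have hb := Finset.add_sum_erase Finset.univ η' (Finset.mem_univ k)
      have hc : (∑ i ∈ Finset.univ.erase k, η' i) = (∑ i ∈ Finset.univ.erase k, η i) := by
        apply Finset.sum_congr rfl
        intro i hmem
        exact hη'ne i (Finset.ne_of_mem_erase hmem)
      rw [hc] at hb
      omega
    obtain ⟨u1, hu10, hu1⟩ := ih η' hsum' hη'0 j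
    set j' : ZMod n := j - ∑ k : ZMod n, (η' k : ZMod n) * k with hj'
    obtain ⟨u2, hu20, hu2⟩ := reach_single n j' k hk0
    have hcomp := reach_trans (fun i => CycleCfg n j i + η' i)
      (fun i => if i = k then 1 else 0) (CycleCfg n j') (CycleCfg n (j' - k))
      ⟨u1, hu10, hu1⟩ ⟨u2, hu20, hu2⟩
    obtain ⟨w, hw0, hw⟩ := hcomp
    have hcfg : ∀ i : ZMod n,
        CycleCfg n j i + η' i + (if i = k then 1 else 0) = CycleCfg n j i + η i := by
      intro i
      by_cases h : i = k
      · subst h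
        rw [hη'k, if_pos rfl]
        omega
      · rw [hη'ne i h, if_neg h]
        omega
    have hpt : ∀ x : ZMod n, (η x : ZMod n) =
        (η' x : ZMod n) + (if x = k then 1 else 0) := by
      intro x
      by_cases h : x = k
      · subst h
        rw [hη'k, if_pos rfl, Nat.cast_sub (by omega : 1 ≤ η x)]
        push_cast
        ring
      · rw [hη'ne x h, if_neg h, add_zero]
    have hSsum : (∑ x : ZMod n, (η x : ZMod n) * x) =
        (∑ x : ZMod n, (η' x : ZMod n) * x) + k := by
      calc (∑ x : ZMod n, (η x : ZMod n) * x)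
          = ∑ x : ZMod n, ((η' x : ZMod n) * x + (if x = k then (1:ZMod n) else 0) * x) :=
            Finset.sum_congr rfl (fun x _ => by rw [hpt x]; ring)
        _ = (∑ x : ZMod n, (η' x : ZMod n) * x) +
              ∑ x : ZMod n, (if x = k then (1:ZMod n) else 0) * x :=
            Finset.sum_add_distrib
        _ = (∑ x : ZMod n, (η' x : ZMod n) * x) + k := by
            congr 1
            simp [ite_mul, Finset.sum_ite_eq']
    have hm : j - ∑ x : ZMod n, (η x : ZMod n) * x = j' - k := by
      rw [hj', hSsum]
      ring
    refine ⟨w, hw0, ?_⟩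
    intro i hi
    have := hw i hi
    rw [hm]
    simp only [CycleToppleVal] at this ⊢
    rw [← hcfg i]
    exact this

/-- Least action principle: the constructed odometer is minimal. -/
private lemma cycle_minimal (n : ℕ) [NeZero n] (m : ZMod n) (c u : ZMod n → ℕ)
    (hu0 : u 0 = 0)
    (hu : ∀ i, i ≠ 0 → (CycleCfg n m i : ℤ) = CycleToppleVal n c u i)
    (u' : ZMod n → ℕ) (hu'0 : u' 0 = 0)
    (hb : ∀ i : ZMod n, i ≠ 0 →
      0 ≤ CycleToppleVal n c u' i ∧ CycleToppleVal n c u' i ≤ 1) :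
    ∀ i, u i ≤ u' i := by
  set W : ℕ → ℤ := fun i => (u' ((i : ℕ) : ZMod n) : ℤ) - (u ((i : ℕ) : ZMod n) : ℤ) with hWdef
  suffices hpos : ∀ i : ℕ, i ≤ n → 0 ≤ W i by
    intro i
    have h1 : ((i.val : ℕ) : ZMod n) = i := ZMod.natCast_rightInverse i
    have h2 := hpos i.val (le_of_lt (ZMod.val_lt i))
    simp only [hWdef, h1] at h2
    omega
  have hkey : ∀ i : ℕ, 1 ≤ i → i < n →
      W (i+1) + W (i-1) - 2 * W i ≤ 1 - (CycleCfg n m ((i : ℕ) : ZMod n) : ℤ) ∧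
      -(CycleCfg n m ((i : ℕ) : ZMod n) : ℤ) ≤ W (i+1) + W (i-1) - 2 * W i := by
    intro i h1 h2
    have hne : ((i : ℕ) : ZMod n) ≠ 0 := by
      intro h
      have hv := ZMod.val_cast_of_lt h2
      rw [h, ZMod.val_zero] at hv
      omega
    have e1 : ((i + 1 : ℕ) : ZMod n) = ((i : ℕ) : ZMod n) + 1 := by push_cast; ring
    have e2 : ((i - 1 : ℕ) : ZMod n) = ((i : ℕ) : ZMod n) - 1 := by
      rw [Nat.cast_sub h1, Nat.cast_one]
    have hA := hu _ hne
    have hB := hb _ hne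
    simp only [CycleToppleVal] at hA hB
    simp only [hWdef, e1, e2]
    omega
  by_contra hcon
  push_neg at hcon
  obtain ⟨i', hi'n, hneg'⟩ := hcon
  obtain ⟨a, ha, hamin⟩ := Finset.exists_min_image (Finset.range (n+1)) W
    ⟨0, Finset.mem_range.2 (by omega)⟩
  set M := W a with hM
  have hmin : ∀ b, b ≤ n → M ≤ W b := fun b hb =>
    hamin b (Finset.mem_range.2 (by omega))
  have hMneg : M < 0 := lt_of_le_of_lt (hmin i' hi'n) hneg'
  have hW0 : W 0 = 0 := by simp [hWdef, hu0, hu'0]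
  have hWn : W n = 0 := by simp [hWdef, ZMod.natCast_self, hu0, hu'0]
  have hex : ∃ i, i ≤ n ∧ W i = M := by
    refine ⟨a, ?_, rfl⟩
    have := Finset.mem_range.1 ha
    omega
  obtain ⟨i₀, hi₀n, hi₀M, hi₀min⟩ :
      ∃ i₀, i₀ ≤ n ∧ W i₀ = M ∧ ∀ b < i₀, ¬(b ≤ n ∧ W b = M) :=
    ⟨Nat.find hex, (Nat.find_spec hex).1, (Nat.find_spec hex).2,
      fun b hb => Nat.find_min hex hb⟩
  have h01 : 1 ≤ i₀ := by
    rcases Nat.eq_zero_or_pos i₀ with h | h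
    · rw [h] at hi₀M
      omega
    · exact h
  have h0n : i₀ < n := by
    rcases Nat.lt_or_ge i₀ n with h | h
    · exact h
    · exfalso
      have : i₀ = n := by omega
      rw [this] at hi₀M
      omega
  have hprev : M + 1 ≤ W (i₀ - 1) := by
    have hge := hmin (i₀ - 1) (by omega)
    have hne : ¬ (i₀ - 1 ≤ n ∧ W (i₀ - 1) = M) :=
      hi₀min (i₀ - 1) (show i₀ - 1 < i₀ by omega)
    have : W (i₀ - 1) ≠ M := fun h => hne ⟨by omega, h⟩
    omega
  have hnext : M ≤ W (i₀ + 1) := hmin _ (by omega)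
  have hk₀ := hkey i₀ h01 h0n
  have hσ₀ : (CycleCfg n m ((i₀ : ℕ) : ZMod n) : ℤ) = 0 := by
    have := hk₀.1
    have hnn : (0:ℤ) ≤ (CycleCfg n m ((i₀ : ℕ) : ZMod n) : ℤ) := Int.natCast_nonneg _
    omega
  have hne₀ : ((i₀ : ℕ) : ZMod n) ≠ 0 := by
    intro h
    have hv := ZMod.val_cast_of_lt h0n
    rw [h, ZMod.val_zero] at hv
    omega
  have him₀ : ((i₀ : ℕ) : ZMod n) = m := by
    by_contra h
    have : CycleCfg n m ((i₀ : ℕ) : ZMod n) = 1 := by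
      simp [CycleCfg, hne₀, h]
    rw [this] at hσ₀
    norm_num at hσ₀
  have hnexteq : W (i₀ + 1) = M := by
    have := hk₀.1
    rw [hσ₀] at this
    omega
  obtain ⟨i₁, hge1, hi₁M, hi₁n, hi₁gt⟩ :
      ∃ i₁, i₀ + 1 ≤ i₁ ∧ W i₁ = M ∧ i₁ ≤ n ∧ ∀ b, i₁ < b → b ≤ n → ¬(W b = M) :=
    ⟨Nat.findGreatest (fun i => W i = M) n,
      Nat.le_findGreatest (P := fun i => W i = M) (m := i₀ + 1) (show i₀ + 1 ≤ n by omega) hnexteq,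
      Nat.findGreatest_spec (P := fun i => W i = M) (m := i₀ + 1) (show i₀ + 1 ≤ n by omega) hnexteq,
      Nat.findGreatest_le (P := fun i => W i = M) n,
      fun b h1 h2 => Nat.findGreatest_is_greatest (P := fun i => W i = M) h1 h2⟩
  have h1n : i₁ < n := by
    rcases Nat.lt_or_ge i₁ n with h | h
    · exact h
    · exfalso
      have : i₁ = n := by omega
      rw [this] at hi₁M
      omega
  have hgt : W (i₁ + 1) ≠ M := hi₁gt (i₁ + 1) (by omega) (by omega)
  have hnext1 : M + 1 ≤ W (i₁ + 1) := by
    have := hmin (i₁ + 1) (by omega)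
    omega
  have hprev1 : M ≤ W (i₁ - 1) := hmin _ (by omega)
  have hk₁ := hkey i₁ (by omega) h1n
  have hσ₁ : (CycleCfg n m ((i₁ : ℕ) : ZMod n) : ℤ) = 0 := by
    have := hk₁.1
    have hnn : (0:ℤ) ≤ (CycleCfg n m ((i₁ : ℕ) : ZMod n) : ℤ) := Int.natCast_nonneg _
    omega
  have hne₁ : ((i₁ : ℕ) : ZMod n) ≠ 0 := by
    intro h
    have hv := ZMod.val_cast_of_lt h1n
    rw [h, ZMod.val_zero] at hv
    omega
  have him₁ : ((i₁ : ℕ) : ZMod n) = m := by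
    by_contra h
    have : CycleCfg n m ((i₁ : ℕ) : ZMod n) = 1 := by
      simp [CycleCfg, hne₁, h]
    rw [this] at hσ₁
    norm_num at hσ₁
  have : i₀ = i₁ := by
    have hv0 := ZMod.val_cast_of_lt h0n
    have hv1 := ZMod.val_cast_of_lt h1n
    rw [him₀] at hv0
    rw [him₁] at hv1
    omega
  omega

end Aux

/-- Adding a configuration `η` to the recurrent configuration `c_j` on a cycle
of length `n` and stabilizing yields `c_m` with
`m ≡ j - ∑_{k=1}^{n-1} η(v_k)·k (mod n)`. -/
theorem cycle_add_config_stabilize (n : ℕ) [NeZero n] (j : ZMod n)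
    (η : ZMod n → ℕ) (hη : η 0 = 0) :
    CycleIsStabilization n (fun i => CycleCfg n j i + η i)
      (CycleCfg n (j - ∑ k : ZMod n, (η k : ZMod n) * k)) := by
  obtain ⟨u, hu0, hu⟩ := reach_main n (∑ i : ZMod n, η i) η rfl hη j
  refine ⟨u, hu0, by simp [CycleCfg], hu, ?_, ?_⟩
  · intro i hi
    unfold CycleCfg
    split_ifs <;> omega
  · intro u' hu'0 hb
    exact cycle_minimal n _ _ u hu0 hu u' hu'0 hb
end

section
/- Let C be a cycle of length n with dissipative vertex p, other vertices v_1,...,v_{n-1} numbered counterclockwise, and let 1 ≤ k ≤ n−1, t ≥ 1. Then the stabilization of c_j + t·δ_{v_k} (adding t chips at v_k to recurrent configuration c_j) equals c_m with m ≡ j − t·k (mod n). -/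
namespace CycleAux

variable {n : ℕ}

/-- one firing of vertex `i` on a (ℤ-valued) chip configuration. -/
def fire (c : ZMod n → ℤ) (i : ZMod n) : ZMod n → ℤ :=
  fun x => c x + (if i = x + 1 then 1 else 0) + (if i = x - 1 then 1 else 0)
    - 2 * (if i = x then 1 else 0)

/-- apply a list of firings. -/
def applyL (c : ZMod n → ℤ) : List (ZMod n) → (ZMod n → ℤ)
  | [] => c
  | i :: L => applyL (fire c i) L

/-- the list of firings is legal from `c`. -/
def Legal (c : ZMod n → ℤ) : List (ZMod n) → Prop
  | [] => True
  | i :: L => i ≠ 0 ∧ 2 ≤ c i ∧ Legal (fire c i) L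

lemma applyL_eq : ∀ (L : List (ZMod n)) (c : ZMod n → ℤ) (x : ZMod n),
    applyL c L x = c x + (L.count (x+1) : ℤ) + (L.count (x-1) : ℤ) - 2 * (L.count x : ℤ)
  | [], c, x => by simp [applyL]
  | i :: L, c, x => by
    simp only [applyL, applyL_eq L, List.count_cons, beq_iff_eq, fire]
    push_cast
    ring

lemma legal_count_zero : ∀ (L : List (ZMod n)) (c : ZMod n → ℤ), Legal c L → L.count 0 = 0
  | [], c, _ => rfl
  | i :: L, c, h => by
    rcases h with ⟨h0, _, hL⟩
    simp [List.count_cons, legal_count_zero L _ hL, h0]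

lemma legal_append {L₁ L₂ : List (ZMod n)} {c : ZMod n → ℤ}
    (h₁ : Legal c L₁) (h₂ : Legal (applyL c L₁) L₂) : Legal c (L₁ ++ L₂) := by
  induction L₁ generalizing c with
  | nil => exact h₂
  | cons i L ih => exact ⟨h₁.1, h₁.2.1, ih h₁.2.2 h₂⟩

lemma applyL_append (L₁ L₂ : List (ZMod n)) (c : ZMod n → ℤ) :
    applyL c (L₁ ++ L₂) = applyL (applyL c L₁) L₂ := by
  induction L₁ generalizing c with
  | nil => rfl
  | cons i L ih => simp [applyL, ih]

lemma legal_mono {L : List (ZMod n)} {c c' : ZMod n → ℤ} (hcc : ∀ x, c x ≤ c' x)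
    (h : Legal c L) : Legal c' L := by
  induction L generalizing c c' with
  | nil => trivial
  | cons i L ih =>
    refine ⟨h.1, le_trans h.2.1 (hcc i), ih (fun x => ?_) h.2.2⟩
    simp only [fire]
    have := hcc x
    omega

/-- least action principle: a legal sequence is dominated by any stabilizing vector. -/
lemma legal_le (L : List (ZMod n)) (c : ZMod n → ℤ) (u' : ZMod n → ℕ)
    (hleg : Legal c L) (h0 : u' 0 = 0)
    (hb : ∀ i : ZMod n, i ≠ 0 → c i + (u' (i+1) : ℤ) + (u' (i-1) : ℤ) - 2 * (u' i : ℤ) ≤ 1) :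
    ∀ x, (L.count x) ≤ u' x := by
  induction L generalizing c u' with
  | nil => intro x; simp
  | cons i L ih =>
    obtain ⟨hi0, h2, hL⟩ := hleg
    have hui : 1 ≤ u' i := by
      by_contra h
      have hui0 : u' i = 0 := by omega
      have := hb i hi0
      rw [hui0] at this
      have h1 : (0:ℤ) ≤ (u' (i+1) : ℤ) := Int.natCast_nonneg _
      have h2' : (0:ℤ) ≤ (u' (i-1) : ℤ) := Int.natCast_nonneg _
      push_cast at this
      omega
    set u'' : ZMod n → ℕ := fun x => u' x - (if i = x then 1 else 0) with hu''
    have hcast : ∀ y : ZMod n, (u'' y : ℤ) = (u' y : ℤ) - (if i = y then 1 else 0) := by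
      intro y
      simp only [hu'']
      split_ifs with h
      · subst h; push_cast [Nat.cast_sub hui]; ring
      · simp
    have hstep := ih (fire c i) u'' hL
      (by simp only [hu'']; rw [if_neg hi0]; exact h0)
      (by
        intro x hx
        have := hb x hx
        simp only [fire, hcast]
        split_ifs <;> omega)
    intro x
    have hx := hstep x
    simp only [hu''] at hx
    rcases eq_or_ne x i with rfl | hxi
    · rw [List.count_cons_self]
      rw [if_pos rfl] at hx
      omega
    · rw [List.count_cons_of_ne (Ne.symm hxi)]
      rw [if_neg (fun h => hxi h.symm)] at hx
      omega


/-- indicator (as `ℤ`) that `x` is the vertex with (path) index `a`. -/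
def dlt (a : ℕ) (x : ZMod n) : ℤ := if x = (a : ZMod n) then 1 else 0

lemma cast_inj_iff {a b : ℕ} (ha : a < n) (hb : b < n) :
    ((a : ZMod n) = (b : ZMod n)) ↔ a = b := by
  constructor
  · intro h
    have := congrArg ZMod.val h
    rwa [ZMod.val_cast_of_lt ha, ZMod.val_cast_of_lt hb] at this
  · rintro rfl; rfl

lemma cast_ne_zero' {a : ℕ} (h1 : 1 ≤ a) (h2 : a < n) : (a : ZMod n) ≠ 0 := by
  intro h
  have := congrArg ZMod.val h
  rw [ZMod.val_cast_of_lt h2] at this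
  simp at this
  omega

lemma dlt_eq_zero {a b : ℕ} (h' : ¬(a % n = b % n)) : dlt a ((b : ℕ) : ZMod n) = 0 := by
  rw [dlt, if_neg]
  intro h
  have := congrArg ZMod.val h
  rw [ZMod.val_natCast, ZMod.val_natCast] at this
  exact h' this.symm

lemma dlt_self (a : ℕ) : dlt a ((a : ℕ) : ZMod n) = 1 := if_pos rfl

lemma fire_apply (c : ZMod n → ℤ) (r : ℕ) (hr : 1 ≤ r) (x : ZMod n) :
    fire c (r : ZMod n) x = c x + dlt (r-1) x + dlt (r+1) x - 2 * dlt r x := by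
  simp only [fire, dlt]
  have h1 : ((r - 1 : ℕ) : ZMod n) = (r : ZMod n) - 1 := by
    push_cast [Nat.cast_sub hr]; ring
  have h2 : ((r + 1 : ℕ) : ZMod n) = (r : ZMod n) + 1 := by push_cast; ring
  rw [h1, h2]
  have e1 : ((r : ZMod n) = x + 1) ↔ (x = (r : ZMod n) - 1) :=
    eq_comm.trans eq_sub_iff_add_eq.symm
  have e2 : ((r : ZMod n) = x - 1) ↔ (x = (r : ZMod n) + 1) :=
    eq_comm.trans sub_eq_iff_eq_add
  have e3 : ((r : ZMod n) = x) ↔ (x = (r : ZMod n)) := eq_comm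
  rw [if_congr e1 rfl rfl, if_congr e2 rfl rfl, if_congr e3 rfl rfl]


lemma dlt_zero_of_lt {a b : ℕ} (ha : a ≤ n) (hb1 : 1 ≤ b) (hb : b < n) (hne : a ≠ b) :
    dlt a ((b : ℕ) : ZMod n) = 0 := by
  apply dlt_eq_zero
  rw [Nat.mod_eq_of_lt hb]
  rcases Nat.lt_or_ge a n with h | h
  · rw [Nat.mod_eq_of_lt h]; omega
  · have han : a = n := by omega
    subst han
    rw [Nat.mod_self]
    omega

/-- firing the vertices `r, r+1, ..., r+len-1` in increasing order. -/
def upL : ℕ → ℕ → List (ZMod n)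
  | _, 0 => []
  | r, len+1 => (r : ZMod n) :: upL (r+1) len

/-- firing the vertices `r, r-1, ..., r-len+1` in decreasing order. -/
def dnL : ℕ → ℕ → List (ZMod n)
  | _, 0 => []
  | r, len+1 => (r : ZMod n) :: dnL (r-1) len

lemma sweepUp : ∀ (len r : ℕ) (c : ZMod n → ℤ), 1 ≤ len → 1 ≤ r → r + len ≤ n →
    c ((r : ℕ) : ZMod n) = 2 → (∀ i : ℕ, r < i → i < r + len → c ((i : ℕ) : ZMod n) = 1) →
    Legal c (upL r len) ∧
      ∀ x, applyL c (upL r len) x =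
        c x + dlt (r-1) x - dlt r x - dlt (r+len-1) x + dlt (r+len) x := by
  intro len
  induction len with
  | zero => omega
  | succ len ih =>
    intro r c _ hr hrn h2 h1
    have hrn' : r < n := by omega
    rcases Nat.eq_zero_or_pos len with rfl | hlen
    · refine ⟨⟨cast_ne_zero' hr hrn', by rw [h2], trivial⟩, fun x => ?_⟩
      show fire c ((r : ℕ) : ZMod n) x = _
      rw [fire_apply c r hr x]
      have e1 : r + 1 - 1 = r := by omega
      rw [e1]
      ring
    · set c' := fire c ((r : ℕ) : ZMod n) with hc'
      have hc'2 : c' (((r+1) : ℕ) : ZMod n) = 2 := by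
        rw [hc', fire_apply c r hr, h1 (r+1) (by omega) (by omega),
          dlt_zero_of_lt (by omega) (by omega) (by omega) (by omega), dlt_self,
          dlt_zero_of_lt (by omega) (by omega) (by omega) (by omega)]
        ring
      have hc'1 : ∀ i : ℕ, r+1 < i → i < (r+1) + len → c' ((i : ℕ) : ZMod n) = 1 := by
        intro i hi1 hi2
        rw [hc', fire_apply c r hr, h1 i (by omega) (by omega),
          dlt_zero_of_lt (by omega) (by omega) (by omega) (by omega),
          dlt_zero_of_lt (by omega) (by omega) (by omega) (by omega),
          dlt_zero_of_lt (by omega) (by omega) (by omega) (by omega)]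
        ring
      obtain ⟨hL, hF⟩ := ih (r+1) c' hlen (by omega) (by omega) hc'2 hc'1
      refine ⟨⟨cast_ne_zero' hr hrn', by rw [h2], hL⟩, fun x => ?_⟩
      show applyL c' (upL (r+1) len) x = _
      rw [hF x, hc', fire_apply c r hr]
      have e1 : r + 1 + len - 1 = r + (len+1) - 1 := by omega
      have e2 : r + 1 + len = r + (len+1) := by omega
      have e3 : r + 1 - 1 = r := by omega
      rw [e1, e2, e3]
      ring

lemma sweepDn : ∀ (len r : ℕ) (c : ZMod n → ℤ), 1 ≤ len → len ≤ r → r < n →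
    c ((r : ℕ) : ZMod n) = 2 → (∀ i : ℕ, r - len < i → i < r → c ((i : ℕ) : ZMod n) = 1) →
    Legal c (dnL r len) ∧
      ∀ x, applyL c (dnL r len) x =
        c x + dlt (r+1) x - dlt r x - dlt (r+1-len) x + dlt (r-len) x := by
  intro len
  induction len with
  | zero => omega
  | succ len ih =>
    intro r c _ hlr hrn h2 h1
    have hr : 1 ≤ r := by omega
    rcases Nat.eq_zero_or_pos len with rfl | hlen
    · refine ⟨⟨cast_ne_zero' hr hrn, by rw [h2], trivial⟩, fun x => ?_⟩
      show fire c ((r : ℕ) : ZMod n) x = _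
      rw [fire_apply c r hr x]
      have e1 : r + 1 - 1 = r := by omega
      rw [e1]
      ring
    · set c' := fire c ((r : ℕ) : ZMod n) with hc'
      have hc'2 : c' (((r-1) : ℕ) : ZMod n) = 2 := by
        rw [hc', fire_apply c r hr, h1 (r-1) (by omega) (by omega), dlt_self,
          dlt_zero_of_lt (by omega) (by omega) (by omega) (by omega),
          dlt_zero_of_lt (by omega) (by omega) (by omega) (by omega)]
        ring
      have hc'1 : ∀ i : ℕ, (r-1) - len < i → i < r-1 → c' ((i : ℕ) : ZMod n) = 1 := by
        intro i hi1 hi2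
        rw [hc', fire_apply c r hr, h1 i (by omega) (by omega),
          dlt_zero_of_lt (by omega) (by omega) (by omega) (by omega),
          dlt_zero_of_lt (by omega) (by omega) (by omega) (by omega),
          dlt_zero_of_lt (by omega) (by omega) (by omega) (by omega)]
        ring
      obtain ⟨hL, hF⟩ := ih (r-1) c' hlen (by omega) (by omega) hc'2 hc'1
      refine ⟨⟨cast_ne_zero' hr hrn, by rw [h2], hL⟩, fun x => ?_⟩
      show applyL c' (dnL (r-1) len) x = _
      rw [hF x, hc', fire_apply c r hr]
      have e1 : r - 1 + 1 = r := by omega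
      have e2 : r - 1 + 1 - len = r + 1 - (len+1) := by omega
      have e3 : r - 1 - len = r - (len+1) := by omega
      rw [e2, e3, e1]
      ring


/-- one full wave: fire every interior vertex of `(p,q)` once, starting at `k`
and moving outwards. -/
def waveL (p q k : ℕ) : List (ZMod n) := upL k (q-k) ++ dnL (k-1) (k-1-p)

lemma wave (p q k : ℕ) (c : ZMod n → ℤ) (hpk : p < k) (hkq : k < q) (hqn : q ≤ n)
    (h2 : c ((k : ℕ) : ZMod n) = 2)
    (h1 : ∀ i : ℕ, p < i → i < q → i ≠ k → c ((i : ℕ) : ZMod n) = 1) :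
    Legal c (waveL p q k) ∧
      ∀ x, applyL c (waveL p q k) x =
        c x + dlt p x + dlt q x - dlt (p+1) x - dlt (q-1) x := by
  obtain ⟨hL₁, hF₁⟩ := sweepUp (q-k) k c (by omega) (by omega) (by omega) h2
    (fun i hi1 hi2 => h1 i (by omega) (by omega) (by omega))
  have e1 : k + (q - k) - 1 = q - 1 := by omega
  have e2 : k + (q - k) = q := by omega
  rw [e1, e2] at hF₁
  rcases Nat.eq_zero_or_pos (k - 1 - p) with h0 | hpos
  · have hkp : k = p + 1 := by omega
    have hwl : (waveL p q k : List (ZMod n)) = upL k (q-k) := by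
      rw [waveL, h0]; simp [dnL]
    rw [hwl]
    refine ⟨hL₁, fun x => ?_⟩
    rw [hF₁ x, hkp]
    have e3 : p + 1 - 1 = p := by omega
    rw [e3]
    ring
  · obtain ⟨hL₂, hF₂⟩ := sweepDn (k-1-p) (k-1) (applyL c (upL k (q-k)))
      (by omega) (by omega) (by omega)
      (by
        rw [hF₁, h1 (k-1) (by omega) (by omega) (by omega), dlt_self,
          dlt_zero_of_lt (by omega) (by omega) (by omega) (by omega),
          dlt_zero_of_lt (by omega) (by omega) (by omega) (by omega),
          dlt_zero_of_lt (by omega) (by omega) (by omega) (by omega)]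
        ring)
      (by
        intro i hi1 hi2
        rw [hF₁, h1 i (by omega) (by omega) (by omega),
          dlt_zero_of_lt (by omega) (by omega) (by omega) (by omega),
          dlt_zero_of_lt (by omega) (by omega) (by omega) (by omega),
          dlt_zero_of_lt (by omega) (by omega) (by omega) (by omega),
          dlt_zero_of_lt (by omega) (by omega) (by omega) (by omega)]
        ring)
    refine ⟨legal_append hL₁ hL₂, fun x => ?_⟩
    rw [waveL, applyL_append, hF₂ x, hF₁ x]
    have e3 : k - 1 + 1 = k := by omega
    have e4 : k - 1 + 1 - (k-1-p) = p + 1 := by omega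
    have e5 : k - 1 - (k-1-p) = p := by omega
    rw [e4, e5, e3]
    ring

/-- repeated waves stabilize the segment `(p,q)` with a double chip at `k`:
the result has a single hole at `p + q - k` and one chip is delivered to each
of the two boundary vertices `p`, `q`. -/
lemma tent : ∀ (d p q k : ℕ) (c : ZMod n → ℤ), q - p ≤ d → p < k → k < q → q ≤ n →
    c ((k : ℕ) : ZMod n) = 2 →
    (∀ i : ℕ, p < i → i < q → i ≠ k → c ((i : ℕ) : ZMod n) = 1) →
    ∃ L : List (ZMod n), Legal c L ∧
      ∀ x, applyL c L x = c x + dlt p x + dlt q x - dlt (p+q-k) x - dlt k x := by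
  intro d
  induction d with
  | zero => intro p q k c h hpk hkq; omega
  | succ d ih =>
    intro p q k c hd hpk hkq hqn h2 h1
    obtain ⟨hLw, hFw⟩ := wave p q k c hpk hkq hqn h2 h1
    rcases eq_or_ne k (p+1) with hk1 | hk1
    · refine ⟨waveL p q k, hLw, fun x => ?_⟩
      rw [hFw x]
      have e1 : p + q - k = q - 1 := by omega
      rw [e1, hk1]
      ring
    · rcases eq_or_ne k (q-1) with hk2 | hk2
      · refine ⟨waveL p q k, hLw, fun x => ?_⟩
        rw [hFw x]
        have e1 : p + q - k = p + 1 := by omega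
        rw [e1, hk2]
      · obtain ⟨L₂, hL₂, hF₂⟩ := ih (p+1) (q-1) k (applyL c (waveL p q k))
          (by omega) (by omega) (by omega) (by omega)
          (by
            rw [hFw, h2,
              dlt_zero_of_lt (by omega) (by omega) (by omega) (by omega),
              dlt_zero_of_lt (by omega) (by omega) (by omega) (by omega),
              dlt_zero_of_lt (by omega) (by omega) (by omega) (by omega),
              dlt_zero_of_lt (by omega) (by omega) (by omega) (by omega)]
            ring)
          (by
            intro i hi1 hi2 hik
            rw [hFw, h1 i (by omega) (by omega) hik,
              dlt_zero_of_lt (by omega) (by omega) (by omega) (by omega),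
              dlt_zero_of_lt (by omega) (by omega) (by omega) (by omega),
              dlt_zero_of_lt (by omega) (by omega) (by omega) (by omega),
              dlt_zero_of_lt (by omega) (by omega) (by omega) (by omega)]
            ring)
        refine ⟨waveL p q k ++ L₂, legal_append hLw hL₂, fun x => ?_⟩
        rw [applyL_append, hF₂ x, hFw x]
        have e1 : p + 1 + (q - 1) - k = p + q - k := by omega
        rw [e1]
        ring


lemma final_alg (j k : ZMod n) (hk : k ≠ 0) (x : ZMod n) :
    ((if x = j then (0:ℤ) else 1) + (if x = k then 1 else 0)) + (if x = j then 1 else 0)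
      - (if x = j - k then 1 else 0) - (if x = k then 1 else 0)
      = if x = j - k then 0 else 1 := by
  have hneq : j - k ≠ j := fun h => hk (sub_eq_self.mp h)
  rcases eq_or_ne x j with h1 | h1
  · have h3 : x ≠ j - k := fun h => hneq (by rw [← h, h1])
    rw [if_pos h1, if_pos h1, if_neg h3, if_neg h3]
    ring
  · rw [if_neg h1, if_neg h1]
    rcases eq_or_ne x (j - k) with h3 | h3
    · rw [if_pos h3, if_pos h3]
      ring
    · rw [if_neg h3, if_neg h3]
      ring

/-- adding a single chip at `k ≠ 0` to the recurrent configuration `c_j`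
stabilizes to `c_{j-k}`. -/
lemma single [NeZero n] (j k : ZMod n) (hk : k ≠ 0) (c : ZMod n → ℤ)
    (hc : ∀ x, x ≠ 0 → c x = (if x = j then 0 else 1) + (if x = k then 1 else 0)) :
    ∃ L : List (ZMod n), Legal c L ∧
      ∀ x, x ≠ 0 → applyL c L x = if x = j - k then 0 else 1 := by
  rcases eq_or_ne j k with rfl | hjk
  · refine ⟨[], by simp [Legal], fun x hx => ?_⟩
    show c x = _
    rw [hc x hx, sub_self, if_neg hx]
    split_ifs <;> norm_num
  · have hn1 : 1 ≤ n := Nat.pos_of_ne_zero (NeZero.ne n)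
    have hkv : k.val < n := ZMod.val_lt k
    have hjv : j.val < n := ZMod.val_lt j
    have hkv1 : 1 ≤ k.val := Nat.one_le_iff_ne_zero.mpr
      (fun h => hk ((ZMod.val_eq_zero k).1 h))
    have hkcast : ((k.val : ℕ) : ZMod n) = k := ZMod.natCast_zmod_val k
    have hjcast : ((j.val : ℕ) : ZMod n) = j := ZMod.natCast_zmod_val j
    have hjkv : j.val ≠ k.val := fun h => hjk (by rw [← hjcast, ← hkcast, h])
    have hck : c ((k.val : ℕ) : ZMod n) = 2 := by
      rw [hkcast, hc k hk, if_neg (Ne.symm hjk), if_pos rfl]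
      norm_num
    rcases Nat.lt_or_ge k.val j.val with hlt | hge
    · -- k.val < j.val : segment (0, j.val)
      obtain ⟨L, hL, hF⟩ := tent n 0 j.val k.val c (by omega) (by omega) hlt
        (by omega) hck
        (by
          intro i hi1 hi2 hik
          rw [hc _ (cast_ne_zero' (by omega) (by omega))]
          rw [if_neg (fun h => hjkv (by
            rw [← hjcast] at h
            exact absurd ((cast_inj_iff (by omega) hjv).1 h) (by omega))),
            if_neg (fun h => hik (by
            rw [← hkcast] at h
            exact (cast_inj_iff (by omega) hkv).1 h))]
          norm_num)
      refine ⟨L, hL, fun x hx => ?_⟩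
      have d1 : dlt 0 x = 0 := by rw [dlt, Nat.cast_zero, if_neg hx]
      have d2 : dlt j.val x = if x = j then 1 else 0 := by rw [dlt, hjcast]
      have d3 : dlt (0 + j.val - k.val) x = if x = j - k then 1 else 0 := by
        rw [dlt]
        have : ((0 + j.val - k.val : ℕ) : ZMod n) = j - k := by
          rw [Nat.cast_sub (by omega)]
          push_cast
          rw [hjcast, hkcast]
          ring
        rw [this]
      have d4 : dlt k.val x = if x = k then 1 else 0 := by rw [dlt, hkcast]
      rw [hF x, hc x hx, d1, d2, d3, d4]
      linear_combination final_alg j k hk x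
    · -- j.val < k.val : segment (j.val, n)
      obtain ⟨L, hL, hF⟩ := tent n j.val n k.val c (by omega) (by omega) hkv
        (le_refl n) hck
        (by
          intro i hi1 hi2 hik
          rw [hc _ (cast_ne_zero' (by omega) (by omega))]
          rw [if_neg (fun h => hjkv (by
            rw [← hjcast] at h
            exact absurd ((cast_inj_iff (by omega) hjv).1 h).symm (by omega))),
            if_neg (fun h => hik (by
            rw [← hkcast] at h
            exact (cast_inj_iff (by omega) hkv).1 h))]
          norm_num)
      refine ⟨L, hL, fun x hx => ?_⟩
      have d1 : dlt j.val x = if x = j then 1 else 0 := by rw [dlt, hjcast]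
      have d2 : dlt n x = 0 := by rw [dlt, ZMod.natCast_self, if_neg hx]
      have d3 : dlt (j.val + n - k.val) x = if x = j - k then 1 else 0 := by
        rw [dlt]
        have : ((j.val + n - k.val : ℕ) : ZMod n) = j - k := by
          rw [Nat.cast_sub (by omega)]
          push_cast
          rw [hjcast, hkcast, ZMod.natCast_self]
          ring
        rw [this]
      have d4 : dlt k.val x = if x = k then 1 else 0 := by rw [dlt, hkcast]
      rw [hF x, hc x hx, d1, d2, d3, d4]
      linear_combination final_alg j k hk x


/-- adding `t` chips at `k ≠ 0` to the recurrent configuration `c_j`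
stabilizes to `c_{j - t·k}`, via a legal firing sequence. -/
lemma multi [NeZero n] (j k : ZMod n) (hk : k ≠ 0) (t : ℕ) :
    ∀ c : ZMod n → ℤ,
    (∀ x, x ≠ 0 → c x = (if x = j then 0 else 1) + (if x = k then (t:ℤ) else 0)) →
    ∃ L : List (ZMod n), Legal c L ∧
      ∀ x, x ≠ 0 → applyL c L x = if x = j - (t : ZMod n) * k then 0 else 1 := by
  induction t with
  | zero =>
    intro c hc
    refine ⟨[], by simp [Legal], fun x hx => ?_⟩
    show c x = _
    rw [hc x hx]
    simp
  | succ t ih =>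
    intro c hc
    obtain ⟨L₁, hL₁, hF₁⟩ := ih (fun x => c x - (if x = k then 1 else 0))
      (by
        intro x hx
        show c x - (if x = k then 1 else 0) = _
        rw [hc x hx]
        push_cast
        split_ifs <;> ring)
    have hL₁' : Legal c L₁ := legal_mono
      (by
        intro x
        show c x - (if x = k then 1 else 0) ≤ c x
        split_ifs <;> omega) hL₁
    have happ : ∀ x, applyL c L₁ x =
        applyL (fun x => c x - (if x = k then 1 else 0)) L₁ x + (if x = k then 1 else 0) := by
      intro x
      rw [applyL_eq, applyL_eq]
      show _ = c x - (if x = k then 1 else 0) + _ + _ - _ + _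
      ring
    obtain ⟨L₂, hL₂, hF₂⟩ := single (j - (t : ZMod n) * k) k hk (applyL c L₁)
      (by
        intro x hx
        rw [happ x, hF₁ x hx])
    refine ⟨L₁ ++ L₂, legal_append hL₁' hL₂, fun x hx => ?_⟩
    rw [applyL_append, hF₂ x hx]
    have : j - (t : ZMod n) * k - k = j - ((t+1 : ℕ) : ZMod n) * k := by
      push_cast
      ring
    rw [this]

end CycleAux

/-- Adding `t ≥ 1` chips at the vertex `v_k` (`1 ≤ k ≤ n-1`, i.e. `k ≠ 0`) to
the recurrent configuration `c_j` on the cycle of length `n` and stabilizing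
yields `c_m` with `m ≡ j - t·k (mod n)`. -/
theorem cycle_add_chips_stabilize (n : ℕ) [NeZero n] (j k : ZMod n)
    (hk : k ≠ 0) (t : ℕ) (ht : 1 ≤ t) :
    CycleIsStabilization n (fun i => CycleCfg n j i + if i = k then t else 0)
      (CycleCfg n (j - (t : ZMod n) * k)) := by
  classical
  set cz : ZMod n → ℤ := fun x => ((CycleCfg n j x + if x = k then t else 0 : ℕ) : ℤ) with hcz
  obtain ⟨L, hLeg, hF⟩ := CycleAux.multi j k hk t cz
    (by
      intro x hx
      rw [hcz]
      simp only [CycleCfg, if_neg hx]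
      push_cast
      ring)
  refine ⟨fun i => L.count i, CycleAux.legal_count_zero L cz hLeg, by simp [CycleCfg], ?_, ?_, ?_⟩
  · intro i hi
    have h1 : CycleToppleVal n (fun i => CycleCfg n j i + if i = k then t else 0)
        (fun i => L.count i) i = CycleAux.applyL cz L i := by
      rw [CycleAux.applyL_eq]
      simp only [CycleToppleVal, hcz]
      try push_cast
      try ring
    rw [h1, hF i hi]
    simp only [CycleCfg, if_neg hi]
    split_ifs <;> simp
  · intro i hi
    simp only [CycleCfg]
    split_ifs <;> omega
  · intro u' hu'0 hu'b
    refine CycleAux.legal_le L cz u' hLeg hu'0 ?_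
    intro i hi
    have := (hu'b i hi).2
    simp only [CycleToppleVal] at this
    rw [hcz]
    push_cast
    push_cast at this
    linarith
end

section
/- On the cycle C of length n with dissipative vertex p and non-dissipative vertices v_1,...,v_{n-1}, fix a vertex v_{i_0} with 2·i_0 ≤ n. Under the uniform measure μ on the n recurrent configurations, the probability that adding one chip at v_{i_0} triggers an avalanche of mass M (number of distinct vertices fired) equals: 0 if 0 < M < i_0; 1/n if i_0 ≤ M ≤ n−1−i_0; 2/n if n−i_0 ≤ M < n−1; and 1/n for M = 0 and M = n−1. -/
/-- Stable configuration on the cycle of length `n` with dissipative vertex `0`. -/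
def CycleStable (n : ℕ) (c : ZMod n → ℕ) : Prop :=
  c 0 = 0 ∧ ∀ i : ZMod n, i ≠ 0 → c i ≤ 1

/-- Dhar's burning criterion for recurrence on the cycle. -/
def CycleRecurrent (n : ℕ) (c : ZMod n → ℕ) : Prop :=
  ∃ ord : ZMod n → ℕ, Function.Injective ord ∧ ord 0 = 0 ∧
    ∀ i : ZMod n, i ≠ 0 →
      2 ≤ c i + ((if ord (i + 1) < ord i then 1 else 0) +
                 (if ord (i - 1) < ord i then 1 else 0))

/-- `u` is the odometer of the stabilization of `c` on the cycle of length `n`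
with dissipative vertex `0` (least action principle). -/
def CycleIsOdometer (n : ℕ) (c u : ZMod n → ℕ) : Prop :=
  u 0 = 0 ∧
  (∀ i : ZMod n, i ≠ 0 →
    0 ≤ CycleToppleVal n c u i ∧ CycleToppleVal n c u i ≤ 1) ∧
  (∀ u' : ZMod n → ℕ, u' 0 = 0 →
    (∀ i : ZMod n, i ≠ 0 →
      0 ≤ CycleToppleVal n c u' i ∧ CycleToppleVal n c u' i ≤ 1) →
    ∀ i, u i ≤ u' i)

/-- The avalanche triggered by adding one chip at `v` to the configuration `c`
has mass `M`: the odometer `u` of the stabilization of `c + δ_v` has exactly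
`M` distinct fired vertices. -/
def CycleMassIs (n : ℕ) (c : ZMod n → ℕ) (v : ZMod n) (M : ℕ) : Prop :=
  ∃ u : ZMod n → ℕ,
    CycleIsOdometer n (fun i => c i + if i = v then 1 else 0) u ∧
    M = {i : ZMod n | u i ≠ 0}.ncard

def tentU (s L h v : ℕ) : ℕ := min (min (v - s) (L - v)) h

lemma min3_spec (x y z : ℕ) :
    (min (min x y) z = x ∨ min (min x y) z = y ∨ min (min x y) z = z)
    ∧ min (min x y) z ≤ x ∧ min (min x y) z ≤ y ∧ min (min x y) z ≤ z := by omega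

lemma tent_T (s i₀ L v : ℕ) (hs : s < i₀) (hL : i₀ < L) (hv : 1 ≤ v) :
    ((if v = s ∨ v = L then (0:ℤ) else 1) + (if v = i₀ then 1 else 0)
      + tentU s L (min (i₀ - s) (L - i₀)) (v+1)
      + tentU s L (min (i₀ - s) (L - i₀)) (v-1)
      - 2 * tentU s L (min (i₀ - s) (L - i₀)) v)
    = if v = s + L - i₀ then 0 else 1 := by
  set h := min (i₀ - s) (L - i₀) with hhdef
  have hh : (h = i₀ - s ∨ h = L - i₀) ∧ h ≤ i₀ - s ∧ h ≤ L - i₀ := by omega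
  have h1 := min3_spec (v+1 - s) (L - (v+1)) h
  have h2 := min3_spec (v-1 - s) (L - (v-1)) h
  have h3 := min3_spec (v - s) (L - v) h
  rw [tentU, tentU, tentU]
  generalize min (min (v+1 - s) (L - (v+1))) h = a at h1
  generalize min (min (v-1 - s) (L - (v-1))) h = b at h2
  generalize min (min (v - s) (L - v)) h = c at h3
  clear_value h
  split_ifs <;> omega

-- val helpers
lemma val_sub_one {n : ℕ} [NeZero n] {i : ZMod n} (hi : i ≠ 0) :
    (i - 1).val = i.val - 1 := by
  have h1 : 1 ≤ i.val := by
    rcases Nat.eq_zero_or_pos i.val with h | h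
    · exact absurd (by rw [← ZMod.natCast_zmod_val i, h, Nat.cast_zero]) hi
    · exact h
  have h2 : i.val - 1 < n := by have := ZMod.val_lt i; omega
  have : ((i.val - 1 : ℕ) : ZMod n) = i - 1 := by
    rw [Nat.cast_sub h1, Nat.cast_one, ZMod.natCast_zmod_val]
  rw [← this, ZMod.val_cast_of_lt h2]

lemma val_add_one' {n : ℕ} [NeZero n] (i : ZMod n) (h : i.val + 1 < n) :
    (i + 1).val = i.val + 1 := by
  have : ((i.val + 1 : ℕ) : ZMod n) = i + 1 := by
    rw [Nat.cast_add, Nat.cast_one, ZMod.natCast_zmod_val]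
  rw [← this, ZMod.val_cast_of_lt h]

lemma tentU_zero (s L h : ℕ) : tentU s L h 0 = 0 := by simp [tentU]

lemma tent_key (n i₀ s L : ℕ) [NeZero n] (hs : s < i₀) (hL : i₀ < L) (hLn : L ≤ n)
    (c : ZMod n → ℕ)
    (hc : ∀ v : ℕ, 1 ≤ v → v < n →
      (c (v : ZMod n) : ℤ) = (if v = s ∨ v = L then 0 else 1) + (if v = i₀ then 1 else 0))
    {i : ZMod n} (hi : i ≠ 0) :
    CycleToppleVal n c (fun j => tentU s L (min (i₀-s) (L-i₀)) j.val) i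
      = if i.val = s + L - i₀ then 0 else 1 := by
  have hvlt := ZMod.val_lt i
  have hv1 : 1 ≤ i.val := ZMod.val_pos.mpr hi
  have e1 : tentU s L (min (i₀-s) (L-i₀)) (i+1).val
      = tentU s L (min (i₀-s) (L-i₀)) (i.val + 1) := by
    by_cases hc1 : i.val + 1 < n
    · rw [val_add_one' i hc1]
    · have hn : i.val + 1 = n := by omega
      have : i + 1 = 0 := by
        rw [← ZMod.natCast_zmod_val i, ← Nat.cast_one, ← Nat.cast_add, hn,
          ZMod.natCast_self]
      rw [this, ZMod.val_zero, tentU_zero, hn]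
      have : L - n = 0 := by omega
      simp [tentU, this]
  have e2 : tentU s L (min (i₀-s) (L-i₀)) (i-1).val
      = tentU s L (min (i₀-s) (L-i₀)) (i.val - 1) := by rw [val_sub_one hi]
  have e3 : (c i : ℤ) = (if i.val = s ∨ i.val = L then 0 else 1)
      + (if i.val = i₀ then 1 else 0) := by
    rw [← ZMod.natCast_zmod_val i]
    rw [ZMod.val_cast_of_lt hvlt]
    exact hc i.val hv1 hvlt
  have := tent_T s i₀ L i.val hs hL hv1
  rw [CycleToppleVal]
  rw [e3, e1, e2]
  split_ifs at this ⊢ <;> omega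


lemma tent_min (n i₀ s L : ℕ) [NeZero n] (hs : s < i₀) (hL : i₀ < L) (hLn : L ≤ n)
    (c : ZMod n → ℕ)
    (hc : ∀ v : ℕ, 1 ≤ v → v < n →
      (c (v : ZMod n) : ℤ) = (if v = s ∨ v = L then 0 else 1) + (if v = i₀ then 1 else 0))
    (u' : ZMod n → ℕ) (hu'0 : u' 0 = 0)
    (hu' : ∀ i : ZMod n, i ≠ 0 →
      0 ≤ CycleToppleVal n c u' i ∧ CycleToppleVal n c u' i ≤ 1) :
    ∀ i : ZMod n, tentU s L (min (i₀-s) (L-i₀)) i.val ≤ u' i := by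
  by_contra hcon
  push_neg at hcon
  obtain ⟨j, hj⟩ := hcon
  set u : ZMod n → ℕ := fun i => tentU s L (min (i₀-s) (L-i₀)) i.val with hu
  set d : ZMod n → ℤ := fun i => (u i : ℤ) - u' i with hd
  obtain ⟨b, -, hb⟩ := Finset.exists_max_image Finset.univ d ⟨0, Finset.mem_univ 0⟩
  have hb' : ∀ a : ZMod n, d a ≤ d b := fun a => hb a (Finset.mem_univ a)
  set m := d b with hm
  have hm1 : 1 ≤ m := by
    have := hb' j
    have : (u' j : ℤ) < u j := by exact_mod_cast hj
    simp only [hd] at *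
    omega
  have hd0 : d 0 = 0 := by
    simp [hd, hu, hu'0, ZMod.val_zero, tentU_zero]
  have n2 : 2 ≤ n := by omega
  haveI : Fact (1 < n) := ⟨by omega⟩
  have hone : (1 : ZMod n) ≠ 0 := one_ne_zero
  set r := s + L - i₀ with hr
  have hr1 : 1 ≤ r := by omega
  have hrn : r < n := by omega
  set ρ : ZMod n := (r : ZMod n) with hρ
  have hρval : ρ.val = r := ZMod.val_cast_of_lt hrn
  have hρ0 : ρ ≠ 0 := by
    intro h
    rw [h, ZMod.val_zero] at hρval
    omega
  have tkey := fun (i : ZMod n) (hi : i ≠ 0) => tent_key n i₀ s L hs hL hLn c hc hi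
  -- neighbor propagation
  have nbh : ∀ i : ZMod n, d i = m → i ≠ ρ → d (i+1) = m ∧ d (i-1) = m := by
    intro i hdi hne
    have hi0 : i ≠ 0 := by
      intro h; rw [h, hd0] at hdi; omega
    have h1 := (hu' i hi0).2
    have h2 := tkey i hi0
    have hval : i.val ≠ r := by
      intro h
      exact hne (by rw [hρ, ← h, ZMod.natCast_zmod_val])
    rw [if_neg hval] at h2
    have hineq : CycleToppleVal n c u i - CycleToppleVal n c u' i
        = d (i+1) + d (i-1) - 2 * d i := by
      simp only [CycleToppleVal, hd]; ring
    rw [h2] at hineq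
    have k1 := hb' (i+1)
    have k2 := hb' (i-1)
    constructor <;> omega
  have nbh2 : d ρ = m → d (ρ+1) = m ∨ d (ρ-1) = m := by
    intro hdρ
    have h1 := (hu' ρ hρ0).2
    have h2 := tkey ρ hρ0
    rw [if_pos (by rw [hρval])] at h2
    have hineq : CycleToppleVal n c u ρ - CycleToppleVal n c u' ρ
        = d (ρ+1) + d (ρ-1) - 2 * d ρ := by
      simp only [CycleToppleVal, hd]; ring
    rw [h2] at hineq
    have k1 := hb' (ρ+1)
    have k2 := hb' (ρ-1)
    omega
  -- a maximal point different from ρ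
  have hs0 : ∃ s₀ : ZMod n, d s₀ = m ∧ s₀ ≠ ρ := by
    by_cases hbρ : b = ρ
    · rcases nbh2 (by rw [← hbρ]) with h | h
      · exact ⟨ρ+1, h, fun he => hone (by rwa [add_eq_left] at he)⟩
      · exact ⟨ρ-1, h, fun he => hone (sub_eq_self.mp he)⟩
    · exact ⟨b, rfl, hbρ⟩
  obtain ⟨s₀, hds₀, hs₀ρ⟩ := hs0
  have hs₀0 : s₀ ≠ 0 := by
    intro h; rw [h, hd0] at hds₀; omega
  have hs₀v : 1 ≤ s₀.val := ZMod.val_pos.mpr hs₀0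
  have hs₀lt := ZMod.val_lt s₀
  -- forward and backward walks
  have walkF : ∀ t : ℕ, ∀ i : ZMod n, d i = m →
      (∀ t' : ℕ, t' < t → i + (t' : ZMod n) ≠ ρ) → d (i + (t : ZMod n)) = m := by
    intro t
    induction t with
    | zero => intro i hi _; simpa using hi
    | succ t ih =>
      intro i hi hav
      have h1 : d (i + (t : ZMod n)) = m := ih i hi (fun t' ht' => hav t' (by omega))
      have h2 : i + (t : ZMod n) ≠ ρ := hav t (by omega)
      have h3 := (nbh _ h1 h2).1
      have e : i + ((t+1 : ℕ) : ZMod n) = (i + (t : ZMod n)) + 1 := by push_cast; ring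
      rw [e]; exact h3
  have walkB : ∀ t : ℕ, ∀ i : ZMod n, d i = m →
      (∀ t' : ℕ, t' < t → i - (t' : ZMod n) ≠ ρ) → d (i - (t : ZMod n)) = m := by
    intro t
    induction t with
    | zero => intro i hi _; simpa using hi
    | succ t ih =>
      intro i hi hav
      have h1 : d (i - (t : ZMod n)) = m := ih i hi (fun t' ht' => hav t' (by omega))
      have h2 : i - (t : ZMod n) ≠ ρ := hav t (by omega)
      have h3 := (nbh _ h1 h2).2
      have e : i - ((t+1 : ℕ) : ZMod n) = (i - (t : ZMod n)) - 1 := by push_cast; ring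
      rw [e]; exact h3
  have w1 : s₀ + ((n - s₀.val : ℕ) : ZMod n) = 0 := by
    rw [Nat.cast_sub hs₀lt.le, ZMod.natCast_self, ZMod.natCast_zmod_val]; ring
  have w2 : s₀ - ((s₀.val : ℕ) : ZMod n) = 0 := by
    rw [ZMod.natCast_zmod_val]; ring
  have hex1 : ∃ t : ℕ, 1 ≤ t ∧ (s₀ + (t : ZMod n) = 0 ∨ s₀ + (t : ZMod n) = ρ) :=
    ⟨n - s₀.val, by omega, Or.inl w1⟩
  have hex2 : ∃ t : ℕ, 1 ≤ t ∧ (s₀ - (t : ZMod n) = 0 ∨ s₀ - (t : ZMod n) = ρ) :=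
    ⟨s₀.val, hs₀v, Or.inl w2⟩
  set t₁ := Nat.find hex1 with ht₁def
  set t₂ := Nat.find hex2 with ht₂def
  have ht₁ := Nat.find_spec hex1
  have ht₂ := Nat.find_spec hex2
  have ht₁le : t₁ ≤ n - s₀.val := Nat.find_le ⟨by omega, Or.inl w1⟩
  have ht₂le : t₂ ≤ s₀.val := Nat.find_le ⟨hs₀v, Or.inl w2⟩
  have avoidF : ∀ t' : ℕ, t' < t₁ → s₀ + (t' : ZMod n) ≠ ρ := by
    intro t' h' he
    rcases Nat.eq_zero_or_pos t' with h0 | h0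
    · rw [h0] at he; simp at he; exact hs₀ρ he
    · exact Nat.find_min hex1 h' ⟨h0, Or.inr he⟩
  have avoidB : ∀ t' : ℕ, t' < t₂ → s₀ - (t' : ZMod n) ≠ ρ := by
    intro t' h' he
    rcases Nat.eq_zero_or_pos t' with h0 | h0
    · rw [h0] at he; simp at he; exact hs₀ρ he
    · exact Nat.find_min hex2 h' ⟨h0, Or.inr he⟩
  have hF : d (s₀ + (t₁ : ZMod n)) = m := walkF t₁ s₀ hds₀ avoidF
  have hB : d (s₀ - (t₂ : ZMod n)) = m := walkB t₂ s₀ hds₀ avoidB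
  have hF0 : s₀ + (t₁ : ZMod n) ≠ 0 := by
    intro h; rw [h, hd0] at hF; omega
  have hB0 : s₀ - (t₂ : ZMod n) ≠ 0 := by
    intro h; rw [h, hd0] at hB; omega
  have hFρ : s₀ + (t₁ : ZMod n) = ρ := (ht₁.2).resolve_left hF0
  have hBρ : s₀ - (t₂ : ZMod n) = ρ := (ht₂.2).resolve_left hB0
  have hsum : ((t₁ + t₂ : ℕ) : ZMod n) = 0 := by
    push_cast
    linear_combination hFρ - hBρ
  have hdvd : n ∣ t₁ + t₂ := (ZMod.natCast_eq_zero_iff _ _).mp hsum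
  have hle : n ≤ t₁ + t₂ := Nat.le_of_dvd (by omega) hdvd
  have ht₁eq : t₁ = n - s₀.val := by omega
  rw [ht₁eq, w1] at hFρ
  exact hρ0 hFρ.symm

lemma tentU_ne_zero (s L h v : ℕ) : tentU s L h v ≠ 0 ↔ s < v ∧ v < L ∧ 0 < h := by
  unfold tentU; omega

lemma tent_odometer (n i₀ s L : ℕ) [NeZero n] (hs : s < i₀) (hL : i₀ < L) (hLn : L ≤ n)
    (c : ZMod n → ℕ)
    (hc : ∀ v : ℕ, 1 ≤ v → v < n →
      (c (v : ZMod n) : ℤ) = (if v = s ∨ v = L then 0 else 1) + (if v = i₀ then 1 else 0)) :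
    CycleIsOdometer n c (fun i => tentU s L (min (i₀-s) (L-i₀)) i.val) := by
  refine ⟨?_, ?_, ?_⟩
  · show tentU s L _ (0 : ZMod n).val = 0
    rw [ZMod.val_zero, tentU_zero]
  · intro i hi
    have := tent_key n i₀ s L hs hL hLn c hc hi
    rw [this]
    split_ifs <;> norm_num
  · exact fun u' h0 hb i => tent_min n i₀ s L hs hL hLn c hc u' h0 hb i

lemma tent_mass (n i₀ s L : ℕ) [NeZero n] (hs : s < i₀) (hL : i₀ < L) (hLn : L ≤ n) :
    {i : ZMod n | tentU s L (min (i₀-s) (L-i₀)) i.val ≠ 0}.ncard = L - s - 1 := by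
  have h0 : 0 < min (i₀-s) (L-i₀) := by omega
  have hset : {i : ZMod n | tentU s L (min (i₀-s) (L-i₀)) i.val ≠ 0}
      = (fun v : ℕ => (v : ZMod n)) '' (Set.Ioo s L) := by
    ext i
    simp only [Set.mem_setOf_eq, Set.mem_image, Set.mem_Ioo, tentU_ne_zero]
    constructor
    · rintro ⟨h1, h2, -⟩
      exact ⟨i.val, ⟨h1, h2⟩, ZMod.natCast_zmod_val i⟩
    · rintro ⟨v, ⟨h1, h2⟩, rfl⟩
      rw [ZMod.val_cast_of_lt (lt_of_lt_of_le h2 hLn)]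
      exact ⟨h1, h2, h0⟩
  rw [hset, Set.ncard_image_of_injOn, ← Finset.coe_Ioo, Set.ncard_coe_finset, Nat.card_Ioo]
  intro v hv w hw he
  simp only at he
  have : ((v : ZMod n)).val = ((w : ZMod n)).val := by rw [he]
  rwa [ZMod.val_cast_of_lt (lt_of_lt_of_le hv.2 hLn),
    ZMod.val_cast_of_lt (lt_of_lt_of_le hw.2 hLn)] at this

lemma mass_is_tent (n i₀ s L : ℕ) [NeZero n] (hs : s < i₀) (hL : i₀ < L) (hLn : L ≤ n)
    (c : ZMod n → ℕ)
    (hc : ∀ v : ℕ, 1 ≤ v → v < n →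
      ((c (v : ZMod n) : ℤ) + (if (v : ZMod n) = ((i₀ : ℕ) : ZMod n) then 1 else 0))
        = (if v = s ∨ v = L then 0 else 1) + (if v = i₀ then 1 else 0)) :
    CycleMassIs n c ((i₀ : ℕ) : ZMod n) (L - s - 1) := by
  refine ⟨fun i => tentU s L (min (i₀-s) (L-i₀)) i.val, ?_, ?_⟩
  · apply tent_odometer n i₀ s L hs hL hLn
    intro v hv1 hvn
    have := hc v hv1 hvn
    rw [← this]
    push_cast
    ring
  · exact (tent_mass n i₀ s L hs hL hLn).symm

lemma mass_unique {n : ℕ} (c : ZMod n → ℕ) (v : ZMod n) {M M' : ℕ}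
    (h : CycleMassIs n c v M) (h' : CycleMassIs n c v M') : M = M' := by
  obtain ⟨u, hu, hM⟩ := h
  obtain ⟨u', hu', hM'⟩ := h'
  have : u = u' := funext fun i =>
    le_antisymm (hu.2.2 u' hu'.1 hu'.2.1 i) (hu'.2.2 u hu.1 hu.2.1 i)
  rw [hM, hM', this]

def cfg (n : ℕ) (k : ZMod n) : ZMod n → ℕ := fun i => if i = 0 ∨ i = k then 0 else 1

def massOf (n i₀ : ℕ) (k : ZMod n) : ℕ :=
  if k = ((i₀ : ℕ) : ZMod n) then 0 else if k = 0 then n - 1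
  else if k.val < i₀ then n - 1 - k.val else k.val - 1

lemma cast_eq_k_iff {n v : ℕ} [NeZero n] (hv : v < n) (k : ZMod n) :
    ((v : ZMod n) = k) ↔ v = k.val := by
  constructor
  · intro h
    have := congrArg ZMod.val h
    rwa [ZMod.val_cast_of_lt hv] at this
  · intro h
    rw [h, ZMod.natCast_zmod_val]

lemma mass_exists (n i₀ : ℕ) [NeZero n] (h1 : 1 ≤ i₀) (h2 : 2*i₀ ≤ n) (k : ZMod n) :
    CycleMassIs n (cfg n k) ((i₀ : ℕ) : ZMod n) (massOf n i₀ k) := by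
  have hn2 : 2 ≤ n := by omega
  have hi₀n : i₀ < n := by omega
  have hvi₀ : (((i₀ : ℕ)) : ZMod n).val = i₀ := ZMod.val_cast_of_lt hi₀n
  have hkval := ZMod.val_lt k
  by_cases hk : k = ((i₀ : ℕ) : ZMod n)
  · rw [massOf, if_pos hk]
    refine ⟨fun _ => 0, ⟨rfl, ?_, fun u' _ _ i => Nat.zero_le _⟩, by simp⟩
    intro i hi
    have he : CycleToppleVal n (fun i => cfg n k i + if i = ((i₀:ℕ):ZMod n) then 1 else 0)
        (fun _ => 0) i = ((cfg n k i + if i = ((i₀:ℕ):ZMod n) then 1 else 0 : ℕ) : ℤ) := by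
      simp [CycleToppleVal]
    rw [he]
    refine ⟨by positivity, ?_⟩
    by_cases hii : i = ((i₀:ℕ) : ZMod n)
    · rw [cfg]
      simp only [hii, ← hk, if_pos, or_true, if_true]
      norm_num
    · rw [cfg]
      simp only [hii, if_neg, if_false]
      split_ifs <;> simp
  · -- k ≠ i₀ : tent cases
    have hkvne : k.val ≠ i₀ := by
      intro h
      exact hk (by rw [← h, ZMod.natCast_zmod_val])
    by_cases hk0 : k = 0
    · -- k = 0 : s = 0, L = n, mass n - 1
      have hmo : massOf n i₀ k = n - 0 - 1 := by
        rw [massOf, if_neg hk, if_pos hk0]; omega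
      rw [hmo]
      apply mass_is_tent n i₀ 0 n h1 hi₀n le_rfl
      intro v hv1 hvn
      have e0 : ¬ ((v : ZMod n) = 0) := by
        rw [cast_eq_k_iff hvn 0, ZMod.val_zero]; omega
      have ei : ((v : ZMod n) = ((i₀:ℕ):ZMod n)) ↔ v = i₀ := by
        rw [cast_eq_k_iff hvn, hvi₀]
      rw [cfg, hk0]
      simp only [e0, ei, or_self, if_false]
      have : ¬ (v = 0 ∨ v = n) := by omega
      rw [if_neg this]
      split_ifs <;> norm_num
    · by_cases hkv : k.val < i₀
      · -- 0 < k.val < i₀ : s = k.val, L = n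
        have hmo : massOf n i₀ k = n - k.val - 1 := by
          rw [massOf, if_neg hk, if_neg hk0, if_pos hkv]; omega
        rw [hmo]
        apply mass_is_tent n i₀ k.val n hkv hi₀n le_rfl
        intro v hv1 hvn
        have e0 : ¬ ((v : ZMod n) = 0) := by
          rw [cast_eq_k_iff hvn 0, ZMod.val_zero]; omega
        have ek : ((v : ZMod n) = k) ↔ v = k.val := cast_eq_k_iff hvn k
        have ei : ((v : ZMod n) = ((i₀:ℕ):ZMod n)) ↔ v = i₀ := by
          rw [cast_eq_k_iff hvn, hvi₀]
        rw [cfg]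
        simp only [e0, ek, ei, false_or]
        have : (v = k.val ∨ v = n) ↔ v = k.val := by omega
        rw [if_congr this rfl rfl]
        split_ifs <;> norm_num
      · -- i₀ < k.val : s = 0, L = k.val
        have hikv : i₀ < k.val := by omega
        have hmo : massOf n i₀ k = k.val - 0 - 1 := by
          rw [massOf, if_neg hk, if_neg hk0, if_neg hkv]; omega
        rw [hmo]
        apply mass_is_tent n i₀ 0 k.val h1 hikv hkval.le
        intro v hv1 hvn
        have e0 : ¬ ((v : ZMod n) = 0) := by
          rw [cast_eq_k_iff hvn 0, ZMod.val_zero]; omega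
        have ek : ((v : ZMod n) = k) ↔ v = k.val := cast_eq_k_iff hvn k
        have ei : ((v : ZMod n) = ((i₀:ℕ):ZMod n)) ↔ v = i₀ := by
          rw [cast_eq_k_iff hvn, hvi₀]
        rw [cfg]
        simp only [e0, ek, ei, false_or]
        have : (v = 0 ∨ v = k.val) ↔ v = k.val := by omega
        rw [if_congr this rfl rfl]
        split_ifs <;> norm_num

lemma arc_lemma (n : ℕ) [NeZero n] (ord : ZMod n → ℕ)
    (hdesc : ∀ i : ZMod n, i ≠ 0 → ord (i+1) < ord i ∨ ord (i-1) < ord i)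
    (j₁ j₂ : ZMod n) (hne : j₁ ≠ j₂)
    (hm1 : ord (j₁+1) < ord j₁ ∧ ord (j₁-1) < ord j₁)
    (hm2 : ord (j₂+1) < ord j₂ ∧ ord (j₂-1) < ord j₂)
    (hint : ∀ x : ℕ, 0 < x → x < (j₂ - j₁).val → j₁ + (x : ZMod n) ≠ 0) : False := by
  set t := (j₂ - j₁).val with ht
  have ht0 : (j₂ - j₁) ≠ 0 := sub_ne_zero.mpr (Ne.symm hne)
  have ht1 : 1 ≤ t := ZMod.val_pos.mpr ht0
  have hj2e : j₂ = j₁ + (t : ZMod n) := by rw [ht, ZMod.natCast_zmod_val]; ring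
  by_cases htt : t = 1
  · have e1 : j₂ = j₁ + 1 := by rw [hj2e, htt, Nat.cast_one]
    have a1 : ord j₂ < ord j₁ := by rw [e1]; exact hm1.1
    have a2 : ord j₁ < ord j₂ := by
      have := hm2.2
      have e2 : j₂ - 1 = j₁ := by rw [e1]; ring
      rwa [e2] at this
    omega
  · have hne1 : (Finset.Ioo 0 t).Nonempty := ⟨1, by rw [Finset.mem_Ioo]; omega⟩
    obtain ⟨x, hx, hmin⟩ := Finset.exists_min_image (Finset.Ioo 0 t)
      (fun x : ℕ => ord (j₁ + (x : ZMod n))) hne1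
    rw [Finset.mem_Ioo] at hx
    have hi0 : j₁ + (x : ZMod n) ≠ 0 := hint x hx.1 hx.2
    rcases hdesc _ hi0 with hstep | hstep
    · by_cases hxe : x + 1 = t
      · have e : j₁ + (x : ZMod n) + 1 = j₂ := by
          rw [hj2e, ← hxe]; push_cast; ring
        have h2 := hm2.2
        have e2 : j₂ - 1 = j₁ + (x : ZMod n) := by rw [← e]; ring
        rw [e] at hstep; rw [e2] at h2; omega
      · have hx1 : x + 1 ∈ Finset.Ioo 0 t := by rw [Finset.mem_Ioo]; omega
        have h2 := hmin (x+1) hx1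
        have e : j₁ + ((x+1 : ℕ) : ZMod n) = j₁ + (x : ZMod n) + 1 := by push_cast; ring
        rw [e] at h2; omega
    · by_cases hxe : x = 1
      · have e : j₁ + (x : ZMod n) - 1 = j₁ := by rw [hxe]; push_cast; ring
        have h2 := hm1.1
        have e2 : j₁ + 1 = j₁ + (x : ZMod n) := by rw [hxe]; push_cast; ring
        rw [e] at hstep; rw [← e2] at hstep; omega
      · have hx1 : x - 1 ∈ Finset.Ioo 0 t := by rw [Finset.mem_Ioo]; omega
        have h2 := hmin (x-1) hx1
        have e : j₁ + ((x-1 : ℕ) : ZMod n) = j₁ + (x : ZMod n) - 1 := by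
          rw [Nat.cast_sub hx.1]; push_cast; ring
        rw [e] at h2; omega

lemma hole_unique (n : ℕ) [NeZero n] (c : ZMod n → ℕ) (hst : CycleStable n c)
    (hrec : CycleRecurrent n c) (j₁ j₂ : ZMod n) (h1 : j₁ ≠ 0) (h2 : j₂ ≠ 0)
    (hc1 : c j₁ = 0) (hc2 : c j₂ = 0) : j₁ = j₂ := by
  by_contra hne
  obtain ⟨ord, hinj, hord0, hcond⟩ := hrec
  have hdesc : ∀ i : ZMod n, i ≠ 0 → ord (i+1) < ord i ∨ ord (i-1) < ord i := by
    intro i hi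
    have h := hcond i hi
    have hci := hst.2 i hi
    by_cases hx : ord (i+1) < ord i
    · exact Or.inl hx
    · right
      by_contra hy
      rw [if_neg hx, if_neg hy] at h
      omega
  have hmax : ∀ j : ZMod n, j ≠ 0 → c j = 0 →
      ord (j+1) < ord j ∧ ord (j-1) < ord j := by
    intro j hj hcj
    have h := hcond j hj
    rw [hcj] at h
    constructor
    · by_contra hx; rw [if_neg hx] at h; split_ifs at h <;> omega
    · by_contra hx; rw [if_neg hx] at h; split_ifs at h <;> omega
  have hm1 := hmax j₁ h1 hc1
  have hm2 := hmax j₂ h2 hc2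
  set t := (j₂ - j₁).val with htdef
  set t' := (j₁ - j₂).val with ht'def
  set x₀ := (-j₁).val with hx₀def
  set y₀ := (-j₂).val with hy₀def
  have hT0 : (j₂ - j₁) ≠ 0 := sub_ne_zero.mpr (Ne.symm hne)
  have hT'0 : (j₁ - j₂) ≠ 0 := sub_ne_zero.mpr hne
  have hX0 : (-j₁) ≠ 0 := neg_ne_zero.mpr h1
  have hY0 : (-j₂) ≠ 0 := neg_ne_zero.mpr h2
  have ht1 : 1 ≤ t := ZMod.val_pos.mpr hT0
  have ht'1 : 1 ≤ t' := ZMod.val_pos.mpr hT'0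
  have hx₀1 : 1 ≤ x₀ := ZMod.val_pos.mpr hX0
  have hy₀1 : 1 ≤ y₀ := ZMod.val_pos.mpr hY0
  have htn : t < n := ZMod.val_lt _
  have ht'n : t' < n := ZMod.val_lt _
  have hx₀n : x₀ < n := ZMod.val_lt _
  have hy₀n : y₀ < n := ZMod.val_lt _
  have htt' : t + t' = n := by
    have hcast : ((t + t' : ℕ) : ZMod n) = 0 := by
      push_cast [htdef, ht'def, ZMod.natCast_zmod_val]
      ring
    have hdvd := (ZMod.natCast_eq_zero_iff _ _).mp hcast
    exact (Nat.eq_of_dvd_of_lt_two_mul (by omega) hdvd (by omega))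
  have hx₀t : x₀ ≠ t := by
    intro h
    apply h2
    have : ((x₀ : ℕ) : ZMod n) = -j₁ := by rw [hx₀def, ZMod.natCast_zmod_val]
    have ht2 : ((t : ℕ) : ZMod n) = j₂ - j₁ := by rw [htdef, ZMod.natCast_zmod_val]
    rw [h, ht2] at this
    linear_combination this
  by_cases hcase : t < x₀
  · refine arc_lemma n ord hdesc j₁ j₂ hne hm1 hm2 ?_
    intro x hx0 hxt he
    have : ((x : ℕ) : ZMod n) = ((x₀ : ℕ) : ZMod n) := by
      rw [hx₀def, ZMod.natCast_zmod_val]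
      linear_combination he
    have hxx : x = x₀ := by
      have := congrArg ZMod.val this
      rwa [ZMod.val_cast_of_lt (by omega : x < n),
        ZMod.val_cast_of_lt hx₀n] at this
    omega
  · have hx₀lt : x₀ < t := by omega
    have hy₀eq : y₀ = x₀ + t' := by
      have hcast : ((x₀ + t' : ℕ) : ZMod n) = -j₂ := by
        push_cast [hx₀def, ht'def, ZMod.natCast_zmod_val]
        ring
      have : y₀ = ((x₀ + t' : ℕ) : ZMod n).val := by rw [hcast]
      rw [this, ZMod.val_cast_of_lt (by omega : x₀ + t' < n)]
    refine arc_lemma n ord hdesc j₂ j₁ (Ne.symm hne) hm2 hm1 ?_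
    intro y hy0 hyt he
    have : ((y : ℕ) : ZMod n) = ((y₀ : ℕ) : ZMod n) := by
      rw [hy₀def, ZMod.natCast_zmod_val]
      linear_combination he
    have hyy : y = y₀ := by
      have := congrArg ZMod.val this
      rwa [ZMod.val_cast_of_lt (by omega : y < n),
        ZMod.val_cast_of_lt hy₀n] at this
    omega

lemma zmod_val_inj {n : ℕ} [NeZero n] {x y : ZMod n} (h : x.val = y.val) : x = y :=
  ZMod.val_injective n h

lemma stable_rec_iff (n : ℕ) [NeZero n] (hn : 2 ≤ n) (c : ZMod n → ℕ) :
    (CycleStable n c ∧ CycleRecurrent n c) ↔ ∃ k : ZMod n, c = cfg n k := by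
  haveI : Fact (1 < n) := ⟨hn⟩
  constructor
  · rintro ⟨hst, hrec⟩
    by_cases hH : ∃ j : ZMod n, j ≠ 0 ∧ c j = 0
    · obtain ⟨j, hj0, hcj⟩ := hH
      refine ⟨j, funext fun i => ?_⟩
      rw [cfg]
      by_cases hi0 : i = 0
      · simp [hi0, hst.1]
      · by_cases hij : i = j
        · simp [hij, hcj]
        · have h1 : ¬(i = 0 ∨ i = j) := by tauto
          rw [if_neg h1]
          have h2 := hst.2 i hi0
          rcases Nat.lt_or_ge (c i) 1 with h | h
          · exact absurd (hole_unique n c hst hrec i j hi0 hj0 (by omega) hcj) hij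
          · omega
    · push_neg at hH
      refine ⟨0, funext fun i => ?_⟩
      rw [cfg]
      by_cases hi0 : i = 0
      · simp [hi0, hst.1]
      · rw [if_neg (by tauto : ¬(i = 0 ∨ i = 0))]
        have h2 := hst.2 i hi0
        have h3 := hH i hi0
        omega
  · rintro ⟨k, rfl⟩
    have hstable : CycleStable n (cfg n k) := by
      constructor
      · rw [cfg]; simp
      · intro i hi; rw [cfg]; split_ifs <;> omega
    refine ⟨hstable, ?_⟩
    by_cases hk0 : k = 0
    · refine ⟨ZMod.val, ZMod.val_injective n, ZMod.val_zero, ?_⟩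
      intro i hi
      have hiv : 1 ≤ i.val := ZMod.val_pos.mpr hi
      have h1 : (i-1).val < i.val := by rw [val_sub_one hi]; omega
      have hc1 : cfg n k i = 1 := by
        rw [cfg, hk0]; rw [if_neg (by tauto : ¬(i = 0 ∨ i = 0))]
      rw [if_pos h1, hc1]
      split_ifs <;> omega
    · have hk1 : 1 ≤ k.val := ZMod.val_pos.mpr hk0
      have hkn := ZMod.val_lt k
      set ord : ZMod n → ℕ := fun i =>
        if i = k then n - 1 else if i.val < k.val then i.val
        else k.val + (n - 1 - i.val) with hord
      have hordz : ord 0 = 0 := by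
        simp only [hord]
        rw [if_neg (fun h => hk0 h.symm), if_pos (by rw [ZMod.val_zero]; omega),
          ZMod.val_zero]
      have hub : ∀ z : ZMod n, z ≠ k → ord z < n - 1 := by
        intro z hz
        simp only [hord]
        rw [if_neg hz]
        have hzv : z.val ≠ k.val := fun he => hz (zmod_val_inj he)
        have := ZMod.val_lt z
        split_ifs <;> omega
      refine ⟨ord, ?_, hordz, ?_⟩
      · intro x y h
        have hxv := ZMod.val_lt x
        have hyv := ZMod.val_lt y
        simp only [hord] at h
        by_cases hxk : x = k <;> by_cases hyk : y = k
        · rw [hxk, hyk]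
        · exfalso
          have hyvk : y.val ≠ k.val := fun he => hyk (zmod_val_inj he)
          rw [if_pos hxk, if_neg hyk] at h
          split_ifs at h <;> omega
        · exfalso
          have hxvk : x.val ≠ k.val := fun he => hxk (zmod_val_inj he)
          rw [if_neg hxk, if_pos hyk] at h
          split_ifs at h <;> omega
        · have hxvk : x.val ≠ k.val := fun he => hxk (zmod_val_inj he)
          have hyvk : y.val ≠ k.val := fun he => hyk (zmod_val_inj he)
          rw [if_neg hxk, if_neg hyk] at h
          refine zmod_val_inj ?_
          split_ifs at h <;> omega
      · intro i hi
        have hiv : 1 ≤ i.val := ZMod.val_pos.mpr hi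
        have hivn := ZMod.val_lt i
        by_cases hik : i = k
        · have hc0 : cfg n k i = 0 := by rw [cfg]; simp [hik]
          have hM : ord i = n - 1 := by simp only [hord]; rw [if_pos hik]
          have hplus : i + 1 ≠ k := by
            rw [hik]; intro he
            exact one_ne_zero (add_eq_left.mp he)
          have hminus : i - 1 ≠ k := by
            rw [hik]; intro he
            exact one_ne_zero (sub_eq_self.mp he)
          rw [hc0, if_pos (by rw [hM]; exact hub _ hplus),
            if_pos (by rw [hM]; exact hub _ hminus)]
        · have hivk : i.val ≠ k.val := fun he => hik (zmod_val_inj he)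
          have hc1 : cfg n k i = 1 := by
            rw [cfg]; rw [if_neg (by tauto : ¬(i = 0 ∨ i = k))]
          rw [hc1]
          by_cases hlt : i.val < k.val
          · have hm1v : (i-1).val = i.val - 1 := val_sub_one hi
            have him1k : i - 1 ≠ k := by
              intro he
              have : (i-1).val = k.val := by rw [he]
              omega
            have hstep : ord (i-1) < ord i := by
              simp only [hord]
              rw [if_neg him1k, if_neg hik, if_pos (by omega : (i-1).val < k.val),
                if_pos hlt, hm1v]
              omega
            rw [if_pos hstep]
            split_ifs <;> omega
          · have hgt : k.val < i.val := by omega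
            by_cases hn1 : i.val = n - 1
            · have hplz : i + 1 = 0 := by
                rw [← ZMod.natCast_zmod_val i, ← Nat.cast_one, ← Nat.cast_add]
                rw [(by omega : i.val + 1 = n), ZMod.natCast_self]
              have hstep : ord (i+1) < ord i := by
                rw [hplz, hordz]
                simp only [hord]
                rw [if_neg hik, if_neg (by omega : ¬ i.val < k.val)]
                omega
              rw [if_pos hstep]
              split_ifs <;> omega
            · have hp1v : (i+1).val = i.val + 1 := val_add_one' i (by omega)
              have hip1k : i + 1 ≠ k := by
                intro he
                have : (i+1).val = k.val := by rw [he]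
                omega
              have hstep : ord (i+1) < ord i := by
                simp only [hord]
                rw [if_neg hip1k, if_neg hik, if_neg (by omega : ¬ (i+1).val < k.val),
                  if_neg (by omega : ¬ i.val < k.val), hp1v]
                omega
              rw [if_pos hstep]
              split_ifs <;> omega

lemma massSet_eq (n i₀ : ℕ) [NeZero n] (h1 : 1 ≤ i₀) (h2 : 2*i₀ ≤ n) (M : ℕ) :
    {c : ZMod n → ℕ | CycleStable n c ∧ CycleRecurrent n c ∧
      CycleMassIs n c ((i₀ : ℕ) : ZMod n) M}
      = cfg n '' {k : ZMod n | massOf n i₀ k = M} := by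
  have hn2 : 2 ≤ n := by omega
  ext c
  simp only [Set.mem_setOf_eq, Set.mem_image]
  constructor
  · rintro ⟨hst, hrec, hmass⟩
    obtain ⟨k, rfl⟩ := (stable_rec_iff n hn2 c).mp ⟨hst, hrec⟩
    exact ⟨k, mass_unique _ _ (mass_exists n i₀ h1 h2 k) hmass, rfl⟩
  · rintro ⟨k, hk, rfl⟩
    obtain ⟨hst, hrec⟩ := (stable_rec_iff n hn2 (cfg n k)).mpr ⟨k, rfl⟩
    exact ⟨hst, hrec, hk ▸ mass_exists n i₀ h1 h2 k⟩

lemma cfg_injective (n : ℕ) : Function.Injective (cfg n) := by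
  intro k k' h
  have h1 : cfg n k' k = 0 := by rw [← h, cfg]; simp
  have h2 : cfg n k k' = 0 := by rw [h, cfg]; simp
  rw [cfg] at h1 h2
  have e1 : k = 0 ∨ k = k' := by
    by_contra hc; rw [if_neg hc] at h1; exact one_ne_zero h1
  have e2 : k' = 0 ∨ k' = k := by
    by_contra hc; rw [if_neg hc] at h2; exact one_ne_zero h2
  rcases e1 with e1 | e1
  · rcases e2 with e2 | e2
    · rw [e1, e2]
    · exact e2.symm
  · exact e1

lemma zmod_eq_cast_iff {n : ℕ} [NeZero n] (k : ZMod n) (a : ℕ) (ha : a < n) :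
    k = (a : ZMod n) ↔ k.val = a := by
  constructor
  · intro h; rw [h, ZMod.val_cast_of_lt ha]
  · intro h; rw [← ZMod.val_cast_of_lt (n := n) ha] at h; exact zmod_val_inj h

/-- On the cycle of length `n` with dissipative vertex `0`, adding a chip at
`v_{i₀}` (with `2·i₀ ≤ n`), the probability (uniform over the `n` recurrent
configurations) that the triggered avalanche has mass `M` is: `0` if
`0 < M < i₀`; `1/n` if `i₀ ≤ M ≤ n-1-i₀`; `2/n` if `n-i₀ ≤ M < n-1`; and `1/n`
for `M = 0` and for `M = n-1`. -/
theorem cycle_avalanche_mass_distribution (n : ℕ) [NeZero n]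
    (i₀ : ℕ) (hi₀ : 1 ≤ i₀) (hi₀n : 2 * i₀ ≤ n) (M : ℕ) :
    (M = 0 →
      ({c : ZMod n → ℕ | CycleStable n c ∧ CycleRecurrent n c ∧
        CycleMassIs n c (i₀ : ZMod n) M}.ncard : ℚ) / n = 1 / n) ∧
    (0 < M → M < i₀ →
      ({c : ZMod n → ℕ | CycleStable n c ∧ CycleRecurrent n c ∧
        CycleMassIs n c (i₀ : ZMod n) M}.ncard : ℚ) / n = 0) ∧
    (i₀ ≤ M → M + i₀ + 1 ≤ n →
      ({c : ZMod n → ℕ | CycleStable n c ∧ CycleRecurrent n c ∧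
        CycleMassIs n c (i₀ : ZMod n) M}.ncard : ℚ) / n = 1 / n) ∧
    (n ≤ M + i₀ → M + 1 < n →
      ({c : ZMod n → ℕ | CycleStable n c ∧ CycleRecurrent n c ∧
        CycleMassIs n c (i₀ : ZMod n) M}.ncard : ℚ) / n = 2 / n) ∧
    (M + 1 = n →
      ({c : ZMod n → ℕ | CycleStable n c ∧ CycleRecurrent n c ∧
        CycleMassIs n c (i₀ : ZMod n) M}.ncard : ℚ) / n = 1 / n) := by
  have hn2 : 2 ≤ n := by omega
  have hi₀lt : i₀ < n := by omega
  have himg := massSet_eq n i₀ hi₀ hi₀n M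
  refine ⟨?_, ?_, ?_, ?_, ?_⟩
  · -- M = 0
    intro hM
    subst hM
    have hset : {k : ZMod n | massOf n i₀ k = 0} = {((i₀ : ℕ) : ZMod n)} := by
      ext k
      have hkvlt := ZMod.val_lt k
      have e0 : k = 0 ↔ k.val = 0 := (ZMod.val_eq_zero k).symm
      have ei : k = ((i₀:ℕ) : ZMod n) ↔ k.val = i₀ := zmod_eq_cast_iff k i₀ hi₀lt
      simp only [Set.mem_setOf_eq, Set.mem_singleton_iff, massOf, ei, e0]
      split_ifs <;> omega
    rw [himg, Set.ncard_image_of_injective _ (cfg_injective n), hset,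
      Set.ncard_singleton]
    norm_num
  · -- 0 < M < i₀
    intro hM1 hM2
    have hset : {k : ZMod n | massOf n i₀ k = M} = ∅ := by
      ext k
      have hkvlt := ZMod.val_lt k
      have e0 : k = 0 ↔ k.val = 0 := (ZMod.val_eq_zero k).symm
      have ei : k = ((i₀:ℕ) : ZMod n) ↔ k.val = i₀ := zmod_eq_cast_iff k i₀ hi₀lt
      simp only [Set.mem_setOf_eq, Set.mem_empty_iff_false, iff_false, massOf, ei, e0]
      split_ifs <;> omega
    rw [himg, Set.ncard_image_of_injective _ (cfg_injective n), hset,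
      Set.ncard_empty]
    norm_num
  · -- i₀ ≤ M ≤ n - 1 - i₀
    intro hM1 hM2
    have hset : {k : ZMod n | massOf n i₀ k = M} = {((M+1 : ℕ) : ZMod n)} := by
      ext k
      have hkvlt := ZMod.val_lt k
      have e0 : k = 0 ↔ k.val = 0 := (ZMod.val_eq_zero k).symm
      have ei : k = ((i₀:ℕ) : ZMod n) ↔ k.val = i₀ := zmod_eq_cast_iff k i₀ hi₀lt
      have em : k = ((M+1 : ℕ) : ZMod n) ↔ k.val = M+1 := zmod_eq_cast_iff k (M+1) (by omega)
      simp only [Set.mem_setOf_eq, Set.mem_singleton_iff, massOf, ei, e0, em]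
      split_ifs <;> omega
    rw [himg, Set.ncard_image_of_injective _ (cfg_injective n), hset,
      Set.ncard_singleton]
    norm_num
  · -- n - i₀ ≤ M < n - 1
    intro hM1 hM2
    have hset : {k : ZMod n | massOf n i₀ k = M}
        = {((M+1 : ℕ) : ZMod n), ((n-1-M : ℕ) : ZMod n)} := by
      ext k
      have hkvlt := ZMod.val_lt k
      have e0 : k = 0 ↔ k.val = 0 := (ZMod.val_eq_zero k).symm
      have ei : k = ((i₀:ℕ) : ZMod n) ↔ k.val = i₀ := zmod_eq_cast_iff k i₀ hi₀lt
      have em : k = ((M+1 : ℕ) : ZMod n) ↔ k.val = M+1 := zmod_eq_cast_iff k (M+1) (by omega)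
      have em' : k = ((n-1-M : ℕ) : ZMod n) ↔ k.val = n-1-M :=
        zmod_eq_cast_iff k (n-1-M) (by omega)
      simp only [Set.mem_setOf_eq, Set.mem_insert_iff, Set.mem_singleton_iff,
        massOf, ei, e0, em, em']
      split_ifs <;> omega
    have hne : ((M+1 : ℕ) : ZMod n) ≠ ((n-1-M : ℕ) : ZMod n) := by
      intro h
      have := congrArg ZMod.val h
      rw [ZMod.val_cast_of_lt (by omega), ZMod.val_cast_of_lt (by omega)] at this
      omega
    rw [himg, Set.ncard_image_of_injective _ (cfg_injective n), hset,
      Set.ncard_pair hne]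
    norm_num
  · -- M = n - 1
    intro hM
    have hset : {k : ZMod n | massOf n i₀ k = M} = {(0 : ZMod n)} := by
      ext k
      have hkvlt := ZMod.val_lt k
      have e0 : k = 0 ↔ k.val = 0 := (ZMod.val_eq_zero k).symm
      have ei : k = ((i₀:ℕ) : ZMod n) ↔ k.val = i₀ := zmod_eq_cast_iff k i₀ hi₀lt
      simp only [Set.mem_setOf_eq, Set.mem_singleton_iff, massOf, ei, e0]
      split_ifs <;> omega
    rw [himg, Set.ncard_image_of_injective _ (cfg_injective n), hset,
      Set.ncard_singleton]
    norm_num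
end

section
/- Let {a_i}_{i≥1} be a strictly increasing sequence of positive integers with a_1 ≥ 1 such that a_{i+1} − a_i = 1 except at indices i belonging to an increasing sequence {T_j}_{j≥1}, where a_{T_j + 1} − a_{T_j} = m_j + 1 for positive even integers m_j. Suppose m_j ≤ 2j for all sufficiently large j and T_j/j → ∞. Then a(i+1)/a(i) → 1 as i → ∞. -/
/-- Let `{a i}` (for `i ≥ 1`) be a strictly increasing sequence of positive
integers whose increments are `1` except at the indices `T j` (a strictly
increasing sequence), where `a (T j + 1) − a (T j) = m j + 1` for positive
even integers `m j`.  If `m j ≤ 2j` for all sufficiently large `j` and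
`T j / j → ∞`, then `a (i+1) / a i → 1` as `i → ∞`. -/
theorem increment_sequence_ratio_tendsto_one (a T m : ℕ → ℕ)
    (ha1 : 1 ≤ a 1) (hmono : ∀ i, 1 ≤ i → a i < a (i + 1))
    (hT : StrictMono T) (hT1 : 1 ≤ T 1)
    (hm : ∀ j, 1 ≤ j → 0 < m j ∧ Even (m j))
    (hjump : ∀ j, 1 ≤ j → a (T j + 1) = a (T j) + m j + 1)
    (hstep : ∀ i, 1 ≤ i → (∀ j, 1 ≤ j → T j ≠ i) → a (i + 1) = a i + 1)
    (hmj : ∃ j₀, ∀ j, j₀ ≤ j → m j ≤ 2 * j)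
    (hTj : Filter.Tendsto (fun j => (T j : ℝ) / j) Filter.atTop Filter.atTop) :
    Filter.Tendsto (fun i => (a (i + 1) : ℝ) / a i) Filter.atTop (nhds 1) := by
  -- a i ≥ i for i ≥ 1
  have hai : ∀ i, 1 ≤ i → i ≤ a i := by
    intro i hi
    induction i with
    | zero => omega
    | succ n ih =>
      cases n with
      | zero => simpa using ha1
      | succ k =>
        have hn : 1 ≤ k + 1 := by omega
        have h1 := hmono (k + 1) hn
        have h2 := ih hn
        omega
  -- key estimate on increments
  have key : ∀ ε : ℝ, 0 < ε →
      ∀ᶠ i in Filter.atTop, ((a (i + 1) - a i : ℕ) : ℝ) / a i < ε := by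
    intro ε hε
    obtain ⟨j₀, hj₀⟩ := hmj
    obtain ⟨J, hJ⟩ := Filter.eventually_atTop.mp (hTj.eventually_ge_atTop (4 / ε))
    set K := max (max j₀ J) 1 with hK
    rw [Filter.eventually_atTop]
    refine ⟨max (T K + 1) (⌈1 / ε⌉₊ + 1), fun i hi => ?_⟩
    have hiTK : T K + 1 ≤ i := le_trans (le_max_left _ _) hi
    have hiN : (⌈1 / ε⌉₊ + 1 : ℕ) ≤ i := le_trans (le_max_right _ _) hi
    have hi1 : 1 ≤ i := by omega
    have hain : (i : ℕ) ≤ a i := hai i hi1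
    have hapos : (0 : ℝ) < a i := by
      have : 1 ≤ a i := le_trans hi1 hain
      exact_mod_cast this
    have hireal : (1 : ℝ) / ε < i := by
      have h1 : (1 : ℝ) / ε ≤ ⌈1 / ε⌉₊ := Nat.le_ceil _
      have h2 : ((⌈1 / ε⌉₊ : ℕ) : ℝ) + 1 ≤ i := by exact_mod_cast hiN
      linarith
    have haireal : (i : ℝ) ≤ a i := by exact_mod_cast hain
    rw [div_lt_iff₀ hapos]
    by_cases hcase : ∃ j, 1 ≤ j ∧ T j = i
    · obtain ⟨j, hj1, hTji⟩ := hcase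
      -- increment is m j + 1
      have hjumpi : a (i + 1) = a i + m j + 1 := by rw [← hTji]; exact hjump j hj1
      have hd : a (i + 1) - a i = m j + 1 := by omega
      -- j > K
      have hKj : K < j := by
        have : T K < T j := by omega
        exact hT.lt_iff_lt.mp this
      have hjj0 : j₀ ≤ j := le_trans (le_trans (le_max_left _ _) (le_max_left _ _)) hKj.le
      have hjJ : J ≤ j := le_trans (le_trans (le_max_right _ _) (le_max_left _ _)) hKj.le
      have hj1' : (1 : ℝ) ≤ j := by
        have : 1 ≤ j := hj1
        exact_mod_cast this
      have hmle : m j ≤ 2 * j := hj₀ j hjj0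
      -- T j / j ≥ 4/ε, so i ≥ (4/ε) j
      have hTdiv : 4 / ε ≤ (T j : ℝ) / j := hJ j hjJ
      have hjpos : (0 : ℝ) < j := by linarith
      have hTreal : 4 / ε * j ≤ (T j : ℝ) := by
        rw [div_le_div_iff₀ hε hjpos] at hTdiv
        rw [div_mul_eq_mul_div, div_le_iff₀ hε]
        linarith
      have hTi : (T j : ℝ) = i := by exact_mod_cast congrArg (Nat.cast : ℕ → ℝ) hTji
      have hεi : 4 * (j : ℝ) ≤ ε * i := by
        have h4 : ε * (4 / ε * j) = 4 * j := by field_simp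
        nlinarith
      have hdle : ((a (i + 1) - a i : ℕ) : ℝ) ≤ 2 * j + 1 := by
        rw [hd]
        have : (m j : ℝ) ≤ 2 * j := by exact_mod_cast hmle
        push_cast
        linarith
      have : ε * (i : ℝ) ≤ ε * a i := by
        have := mul_le_mul_of_nonneg_left haireal hε.le
        linarith
      linarith
    · push_neg at hcase
      have hd : a (i + 1) = a i + 1 := hstep i hi1 fun j hj => hcase j hj
      have hd1 : a (i + 1) - a i = 1 := by omega
      rw [hd1]
      have h1 : (1 : ℝ) < ε * i := by
        rw [div_lt_iff₀ hε] at hireal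
        linarith
      have : ε * (i : ℝ) ≤ ε * a i := mul_le_mul_of_nonneg_left haireal hε.le
      push_cast
      linarith
  -- the quotient of increments tends to 0
  have h0 : Filter.Tendsto (fun i => ((a (i + 1) - a i : ℕ) : ℝ) / a i)
      Filter.atTop (nhds 0) := by
    rw [NormedAddCommGroup.tendsto_nhds_zero]
    intro ε hε
    filter_upwards [key ε hε] with i h
    rwa [Real.norm_eq_abs, abs_of_nonneg (by positivity)]
  have h1 : Filter.Tendsto (fun i => 1 + ((a (i + 1) - a i : ℕ) : ℝ) / a i)
      Filter.atTop (nhds 1) := by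
    have := (tendsto_const_nhds (x := (1 : ℝ)) (f := Filter.atTop (α := ℕ))).add h0
    simpa using this
  refine h1.congr' ?_
  filter_upwards [Filter.eventually_ge_atTop 1] with i hi
  have hlt := hmono i hi
  have hain : i ≤ a i := hai i hi
  have hapos : (0 : ℝ) < a i := by
    have : 1 ≤ a i := le_trans hi hain
    exact_mod_cast this
  have hsub : ((a (i + 1) - a i : ℕ) : ℝ) = (a (i + 1) : ℝ) - a i := by
    push_cast [Nat.cast_sub hlt.le]
    ring
  rw [hsub]
  field_simp
  ring
end
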